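/- arXiv:1209.0108 — 8 statements merged into one kernel-verified Lean document; each statement's English description precedes it below -/
import Mathlib

section
/- Let N ≥ 1 and j = N/2. The Dirac matrix D_N has exactly two eigenvalues: j+1 with multiplicity 2j+2 = N+2, and −j with multiplicity 2j = N; equivalently, the characteristic polynomial of D_N is (X − (j+1))^(N+2) · (X + j)^N. -/
noncomputable section
open Matrix Polynomial

/-- The diagonal matrix `H` with `H|m⟩ = m|m⟩`, `m = i - N/2` for index `i : Fin (N+1)`. -/
def Hmat (N : ℕ) : Matrix (Fin (N + 1)) (Fin (N + 1)) ℂ :=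
  Matrix.diagonal fun i => (i : ℂ) - (N : ℂ) / 2

/-- The raising operator `E` with `E|m⟩ = √((j-m)(j+m+1)) |m+1⟩`, `j = N/2`. -/
def Emat (N : ℕ) : Matrix (Fin (N + 1)) (Fin (N + 1)) ℂ := fun p q =>
  if (p : ℕ) = (q : ℕ) + 1 then (Real.sqrt ((N - (q : ℕ)) * ((q : ℕ) + 1)) : ℂ) else 0

def Fmat (N : ℕ) : Matrix (Fin (N + 1)) (Fin (N + 1)) ℂ := (Emat N)ᴴ

/-- The Dirac operator `D_N = [[1+H, F], [E, 1-H]]` in block form on `ℂ^(N+1) ⊗ ℂ²`. -/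
def DiracOp (N : ℕ) :
    Matrix (Fin (N + 1) ⊕ Fin (N + 1)) (Fin (N + 1) ⊕ Fin (N + 1)) ℂ :=
  Matrix.fromBlocks (1 + Hmat N) (Fmat N) (Emat N) (1 - Hmat N)

lemma sq_sqrt' (N q : ℕ) (hq : q ≤ N) :
    ((Real.sqrt ((N - (q : ℕ)) * ((q : ℕ) + 1)) : ℂ)) * ((Real.sqrt ((N - (q : ℕ)) * ((q : ℕ) + 1)) : ℂ))
      = ((N : ℂ) - q) * (q + 1) := by
  rw [← Complex.ofReal_mul, Real.mul_self_sqrt (by have : (q:ℝ) ≤ N := Nat.cast_le.2 hq; nlinarith [Nat.cast_nonneg (α := ℝ) q])]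
  push_cast
  ring


lemma Fmat_apply (N : ℕ) (p q : Fin (N+1)) :
    Fmat N p q = if (q : ℕ) = (p : ℕ) + 1 then (Real.sqrt ((N - (p : ℕ)) * ((p : ℕ) + 1)) : ℂ) else 0 := by
  simp [Fmat, Emat, Matrix.conjTranspose_apply, apply_ite (starRingEnd ℂ), Complex.conj_ofReal]

lemma FE (N : ℕ) : Fmat N * Emat N = Matrix.diagonal (fun q : Fin (N+1) => ((N : ℂ) - q) * (q + 1)) := by
  ext q q'
  rw [Matrix.mul_apply]
  simp only [Fmat_apply, Emat]
  by_cases hq : (q : ℕ) < N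
  · rw [Finset.sum_eq_single (⟨(q:ℕ)+1, by omega⟩ : Fin (N+1))]
    · simp only [Fin.val_mk]
      by_cases h : q = q'
      · subst h
        simp [Matrix.diagonal_apply_eq, sq_sqrt' N q (le_of_lt hq)]
      · have h' : ¬ ((q:ℕ)+1 = (q':ℕ)+1) := fun hc => h (Fin.ext (by omega))
        simp [h', Matrix.diagonal_apply_ne _ h]
        exact fun hc => absurd (Fin.ext hc) h
    · intro p _ hp
      have h1 : ¬ ((p:ℕ) = (q:ℕ)+1) := fun hc => hp (Fin.ext (show (p:ℕ) = (q:ℕ)+1 from hc))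
      simp [h1]
    · intro h; exact absurd (Finset.mem_univ _) h
  · have hz : ∀ p : Fin (N+1), ¬ ((p:ℕ) = (q:ℕ)+1) := by
      intro p hc; have := p.isLt; omega
    simp only [hz, if_false, zero_mul, mul_zero, Finset.sum_const_zero]
    by_cases h : q = q'
    · subst h; rw [Matrix.diagonal_apply_eq]
      have hc : ((q:ℕ) : ℂ) = (N : ℂ) := by rw [show (q:ℕ) = N by omega]
      rw [hc]; ring
    · rw [Matrix.diagonal_apply_ne _ h]

lemma EF (N : ℕ) : Emat N * Fmat N = Matrix.diagonal (fun p : Fin (N+1) => ((N : ℂ) + 1 - p) * p) := by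
  ext p p'
  rw [Matrix.mul_apply]
  simp only [Fmat_apply, Emat]
  by_cases hp : 1 ≤ (p : ℕ)
  · rw [Finset.sum_eq_single (⟨(p:ℕ)-1, by omega⟩ : Fin (N+1))]
    · simp only [Fin.val_mk]
      have h1 : (p:ℕ) = ((p:ℕ)-1) + 1 := by omega
      by_cases h : p = p'
      · subst h
        simp only [if_pos h1, Matrix.diagonal_apply_eq,
          sq_sqrt' N ((p:ℕ)-1) (by have := p.isLt; omega)]
        have hc : ((((p:ℕ)-1 : ℕ)) : ℂ) = (p:ℂ) - 1 := by
          push_cast [Nat.cast_sub hp]; ring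
        rw [hc]; ring
      · have h2 : ¬ ((p':ℕ) = ((p:ℕ)-1) + 1) := fun hc => h (Fin.ext (by omega))
        simp [h2, Matrix.diagonal_apply_ne _ h]
    · intro q _ hq
      have h1 : ¬ ((p:ℕ) = (q:ℕ)+1) := fun hc => hq (Fin.ext (show (q:ℕ) = (p:ℕ)-1 by omega))
      simp [h1]
    · intro h; exact absurd (Finset.mem_univ _) h
  · have hz : ∀ q : Fin (N+1), ¬ ((p:ℕ) = (q:ℕ)+1) := by intro q hc; omega
    simp only [hz, if_false, zero_mul, mul_zero, Finset.sum_const_zero]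
    by_cases h : p = p'
    · subst h; rw [Matrix.diagonal_apply_eq]
      have hc : ((p:ℕ) : ℂ) = 0 := by rw [show (p:ℕ) = 0 by omega]; simp
      rw [hc]; ring
    · rw [Matrix.diagonal_apply_ne _ h]

lemma keyTL (N : ℕ) : (1 + Hmat N) * (1 + Hmat N) + Fmat N * Emat N
    = (1 + Hmat N) + ((N:ℂ)/2 * ((N:ℂ)/2 + 1)) • 1 := by
  rw [FE, Hmat, ← Matrix.diagonal_one]
  simp only [Matrix.smul_eq_diagonal_mul, Matrix.diagonal_add, Matrix.diagonal_mul_diagonal]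
  ext i k
  by_cases h : i = k
  · subst h; simp only [Matrix.diagonal_apply_eq]; ring
  · simp [Matrix.diagonal_apply_ne _ h]

lemma keyBR (N : ℕ) : Emat N * Fmat N + (1 - Hmat N) * (1 - Hmat N)
    = (1 - Hmat N) + ((N:ℂ)/2 * ((N:ℂ)/2 + 1)) • 1 := by
  rw [EF, Hmat, ← Matrix.diagonal_one]
  simp only [Matrix.smul_eq_diagonal_mul, Matrix.diagonal_sub, Matrix.diagonal_add,
    Matrix.diagonal_mul_diagonal]
  ext i k
  by_cases h : i = k
  · subst h; simp only [Matrix.diagonal_apply_eq]; ring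
  · simp [Matrix.diagonal_apply_ne _ h]

lemma keyTR (N : ℕ) : (1 + Hmat N) * Fmat N + Fmat N * (1 - Hmat N) = Fmat N := by
  ext p q
  simp only [Matrix.add_mul, Matrix.mul_sub, Matrix.one_mul, Matrix.mul_one, Matrix.add_apply,
    Matrix.sub_apply, Hmat, Matrix.diagonal_mul, Matrix.mul_diagonal]
  rw [Fmat_apply]
  by_cases h : (q:ℕ) = (p:ℕ)+1
  · rw [if_pos h]
    have hc : ((q:ℕ) : ℂ) = ((p:ℕ) : ℂ) + 1 := by rw [h]; push_cast; ring
    rw [hc]; ring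
  · rw [if_neg h]; ring

lemma keyBL (N : ℕ) : Emat N * (1 + Hmat N) + (1 - Hmat N) * Emat N = Emat N := by
  ext p q
  simp only [Matrix.mul_add, Matrix.sub_mul, Matrix.one_mul, Matrix.mul_one, Matrix.add_apply,
    Matrix.sub_apply, Hmat, Matrix.diagonal_mul, Matrix.mul_diagonal]
  show Emat N p q + Emat N p q * _ + (Emat N p q - _ * Emat N p q) = Emat N p q
  rw [Emat]
  by_cases h : (p:ℕ) = (q:ℕ)+1
  · simp only [if_pos h]
    have hc : ((p:ℕ) : ℂ) = ((q:ℕ) : ℂ) + 1 := by rw [h]; push_cast; ring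
    rw [hc]; ring
  · simp only [if_neg h]; ring

lemma key (N : ℕ) : DiracOp N * DiracOp N
    = DiracOp N + ((N:ℂ)/2 * ((N:ℂ)/2 + 1)) • 1 := by
  rw [DiracOp, Matrix.fromBlocks_multiply, ← Matrix.fromBlocks_one, Matrix.fromBlocks_smul,
    Matrix.fromBlocks_add]
  rw [keyTL, keyBR, keyTR, keyBL]
  simp

lemma eval_charpoly' {n : Type*} [Fintype n] [DecidableEq n] (M : Matrix n n ℂ) (r : ℂ) :
    M.charpoly.eval r = ((r • 1 : Matrix n n ℂ) - M).det := by
  rw [Matrix.charpoly, ← Polynomial.coe_evalRingHom, RingHom.map_det]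
  congr 1
  ext i k
  by_cases h : i = k <;> simp [h, Matrix.charmatrix_apply, Matrix.one_apply, Matrix.diagonal_apply]

lemma root_mem (N : ℕ) (r : ℂ) (hr : (DiracOp N).charpoly.IsRoot r) :
    r = (N:ℂ)/2 + 1 ∨ r = -((N:ℂ)/2) := by
  have hdet : ((r • 1 : Matrix _ _ ℂ) - DiracOp N).det = 0 := by
    rw [← eval_charpoly']; exact hr
  obtain ⟨v, hv, hmul⟩ := (Matrix.exists_mulVec_eq_zero_iff).2 hdet
  have hDv : (DiracOp N).mulVec v = r • v := by
    have := hmul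
    rw [Matrix.sub_mulVec, sub_eq_zero] at this
    rw [← this, Matrix.smul_mulVec, Matrix.one_mulVec]
  have hD2 : (DiracOp N * DiracOp N).mulVec v = (r * r) • v := by
    rw [← Matrix.mulVec_mulVec, hDv, Matrix.mulVec_smul, hDv, smul_smul]
  rw [key, Matrix.add_mulVec, hDv, Matrix.smul_mulVec, Matrix.one_mulVec] at hD2
  obtain ⟨i, hi⟩ := Function.ne_iff.1 hv
  have hscal : r * r = r + (N:ℂ)/2 * ((N:ℂ)/2 + 1) := by
    have := congrFun hD2 i
    simp only [Pi.smul_apply, Pi.add_apply, smul_eq_mul] at this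
    have h2 : (r * r) * v i = (r + (N:ℂ)/2 * ((N:ℂ)/2 + 1)) * v i := by
      rw [← this]; ring
    exact mul_right_cancel₀ hi h2
  have hfac : (r - ((N:ℂ)/2 + 1)) * (r + (N:ℂ)/2) = 0 := by linear_combination hscal
  rcases mul_eq_zero.1 hfac with h | h
  · left; linear_combination h
  · right; linear_combination h

lemma traceD (N : ℕ) : (DiracOp N).trace = 2 * ((N:ℂ) + 1) := by
  have hb : (DiracOp N).trace = (1 + Hmat N).trace + (1 - Hmat N).trace := by
    simp [DiracOp, Matrix.trace, Fintype.sum_sum_type, Matrix.fromBlocks, Matrix.diag]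
  rw [hb, ← Matrix.trace_add]
  have h2 : (1 + Hmat N) + (1 - Hmat N) = (2:ℂ) • (1 : Matrix (Fin (N+1)) (Fin (N+1)) ℂ) := by
    rw [two_smul]; abel
  rw [h2, Matrix.trace_smul, Matrix.trace_one]
  simp


theorem diracN_charpoly (N : ℕ) (hN : 1 ≤ N) :
    (DiracOp N).charpoly =
      (X - C ((N : ℂ) / 2 + 1)) ^ (N + 2) * (X + C ((N : ℂ) / 2)) ^ N := by
  set c1 : ℂ := (N:ℂ)/2 + 1 with hc1
  set c2 : ℂ := -((N:ℂ)/2) with hc2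
  have hc12 : c1 ≠ c2 := by
    rw [hc1, hc2]
    intro h
    have : (N:ℂ) + 1 = 0 := by linear_combination h
    have h2 : ((N+1 : ℕ) : ℂ) = 0 := by push_cast; linear_combination this
    exact Nat.cast_ne_zero.2 (Nat.succ_ne_zero N) h2
  set P := (DiracOp N).charpoly with hP
  have hmonic : P.Monic := (DiracOp N).charpoly_monic
  have hsplits : P.Splits := IsAlgClosed.splits P
  have hdeg : P.natDegree = 2 * N + 2 := by
    rw [hP, Matrix.charpoly_natDegree_eq_dim]
    simp; ring
  have hcard : P.roots.card = 2 * N + 2 := by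
    rw [(Polynomial.splits_iff_card_roots).1 hsplits, hdeg]
  set a := P.roots.count c1 with ha
  set b := P.roots.count c2 with hbdef
  have hmem : ∀ r ∈ P.roots, r = c1 ∨ r = c2 := by
    intro r hrr
    exact root_mem N r (Polynomial.isRoot_of_mem_roots hrr)
  have hdecomp : P.roots = Multiset.replicate a c1 + Multiset.replicate b c2 := by
    ext x
    rw [Multiset.count_add, Multiset.count_replicate, Multiset.count_replicate]
    rcases eq_or_ne x c1 with h1 | h1
    · subst h1
      rw [if_pos rfl, if_neg (fun h => hc12 h.symm), add_zero]
    · rw [if_neg (fun h => h1 h.symm)]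
      rcases eq_or_ne x c2 with h2 | h2
      · subst h2
        rw [if_pos rfl, zero_add]
      · rw [if_neg (fun h => h2 h.symm), add_zero]
        exact Multiset.count_eq_zero_of_notMem fun hx => (hmem x hx).elim h1 h2
  have hab : a + b = 2 * N + 2 := by
    have := hcard
    rw [hdecomp, Multiset.card_add, Multiset.card_replicate, Multiset.card_replicate] at this
    exact this
  have htr : (a : ℂ) * c1 + (b : ℂ) * c2 = 2 * ((N:ℂ) + 1) := by
    have h := (Matrix.trace_eq_sum_roots_charpoly (DiracOp N)).symm
    rw [traceD, hdecomp, Multiset.sum_add, Multiset.sum_replicate, Multiset.sum_replicate,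
      nsmul_eq_mul, nsmul_eq_mul] at h
    exact h
  have hbc : (b : ℂ) = 2 * (N:ℂ) + 2 - a := by
    have : ((a + b : ℕ) : ℂ) = ((2 * N + 2 : ℕ) : ℂ) := by rw [hab]
    push_cast at this
    linear_combination this
  have haC : (a : ℂ) = (N:ℂ) + 2 := by
    have hne : (2 * (N:ℂ) + 2) ≠ 0 := by
      intro h
      have h2 : ((N+1 : ℕ) : ℂ) = 0 := by push_cast; linear_combination h/2
      exact Nat.cast_ne_zero.2 (Nat.succ_ne_zero N) h2
    have hkey : (a:ℂ) * (2 * (N:ℂ) + 2) = ((N:ℂ) + 2) * (2 * (N:ℂ) + 2) := by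
      rw [hc1] at htr
      rw [hc2] at htr
      linear_combination 2 * htr + (N:ℂ) * hbc
    exact mul_right_cancel₀ hne hkey
  have haN : a = N + 2 := by
    have : ((a : ℕ) : ℂ) = ((N + 2 : ℕ) : ℂ) := by push_cast; linear_combination haC
    exact_mod_cast this
  have hbN : b = N := by omega
  have hprod := hsplits.eq_prod_roots_of_monic hmonic
  rw [hdecomp, Multiset.map_add, Multiset.map_replicate, Multiset.map_replicate,
    Multiset.prod_add, Multiset.prod_replicate, Multiset.prod_replicate, haN, hbN] at hprod
  rw [hprod, hc1, hc2]
  rw [map_neg, sub_neg_eq_add]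
end
end

section
/- Let N ≥ 1. The full Dirac operator D̃_N, acting on the Hilbert space M_(N+1)(ℂ) ⊗ ℂ² by D̃_N(a ⊗ v) = a ⊗ v + Σ_{k=1}^{3} [J_k, a] ⊗ σ_k v, has eigenvalues ℓ and −ℓ, each with multiplicity 2ℓ, for every ℓ = 1, …, N, together with the eigenvalue N+1 with multiplicity 2N+2; equivalently, its characteristic polynomial is (X − (N+1))^(2N+2) · ∏_{ℓ=1}^{N} (X − ℓ)^(2ℓ) (X + ℓ)^(2ℓ). -/
noncomputable section
open Matrix Polynomial Kronecker

/-- `J₁ = (E+F)/2`, `J₂ = (E−F)/(2i)`, `J₃ = H`. -/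
def Jmat (N : ℕ) : Fin 3 → Matrix (Fin (N + 1)) (Fin (N + 1)) ℂ :=
  ![(1 / 2 : ℂ) • (Emat N + Fmat N),
    (1 / (2 * Complex.I) : ℂ) • (Emat N - Fmat N),
    Hmat N]

/-- The three Pauli matrices. -/
def pauli : Fin 3 → Matrix (Fin 2) (Fin 2) ℂ :=
  ![!![0, 1; 1, 0], !![0, -Complex.I; Complex.I, 0], !![1, 0; 0, -1]]

/-- The matrix of the commutator map `a ↦ [X, a] = Xa − aX` on `M_(N+1)(ℂ)`,
where a matrix `a` is regarded as the vector of its entries `(p, q) ↦ a p q`. -/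
def adMat {n : Type*} [Fintype n] [DecidableEq n] (X : Matrix n n ℂ) :
    Matrix (n × n) (n × n) ℂ := fun r c =>
  X r.1 c.1 * (if r.2 = c.2 then 1 else 0) - (if r.1 = c.1 then 1 else 0) * X c.2 r.2

/-- The full Dirac operator `D̃_N (a ⊗ v) = a ⊗ v + Σ_k [J_k, a] ⊗ σ_k v` as a matrix on
`M_(N+1)(ℂ) ⊗ ℂ²`, whose elements are regarded as vectors indexed by
`(Fin (N+1) × Fin (N+1)) × Fin 2`. -/
def fullDirac (N : ℕ) :
    Matrix ((Fin (N + 1) × Fin (N + 1)) × Fin 2) ((Fin (N + 1) × Fin (N + 1)) × Fin 2) ℂ :=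
  1 + ∑ k : Fin 3, (adMat (Jmat N k)) ⊗ₖ (pauli k)

namespace FD

def sq (N q : ℕ) : ℝ := ((N : ℝ) - q) * (q + 1)

lemma sq_nonneg' {N q : ℕ} (h : q < N) : 0 ≤ sq N q := by
  have : (q:ℝ) ≤ N := by exact_mod_cast h.le
  unfold sq; nlinarith

lemma Emat_apply' (N : ℕ) (p q : Fin (N+1)) :
    Emat N p q = if (p:ℕ) = (q:ℕ)+1 then ((Real.sqrt (sq N q) : ℝ) : ℂ) else 0 := rfl

lemma Fmat_apply (N : ℕ) (p q : Fin (N+1)) :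
    Fmat N p q = if (q : ℕ) = (p : ℕ) + 1 then ((Real.sqrt (sq N p) : ℝ) : ℂ) else 0 := by
  simp only [Fmat, Matrix.conjTranspose_apply, Emat_apply']
  split_ifs <;> simp [Complex.conj_ofReal]

lemma Hmat_conjTranspose (N : ℕ) : (Hmat N)ᴴ = Hmat N := by
  ext p q
  rw [Matrix.conjTranspose_apply]
  unfold Hmat
  rw [Matrix.diagonal_apply, Matrix.diagonal_apply]
  by_cases h : q = p
  · subst h
    simp [Complex.star_def, map_sub, map_div₀, map_ofNat]
  · rw [if_neg h, if_neg (Ne.symm h), star_zero]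

lemma comm_HE (N : ℕ) : Hmat N * Emat N - Emat N * Hmat N = Emat N := by
  ext p q
  simp only [Matrix.sub_apply, Hmat, Matrix.diagonal_mul, Matrix.mul_diagonal, Emat_apply']
  split_ifs with h
  · have hc : ((p:ℕ):ℂ) = ((q:ℕ):ℂ) + 1 := by exact_mod_cast congrArg (Nat.cast : ℕ → ℂ) h
    rw [hc]; ring
  · ring

lemma comm_HF (N : ℕ) : Hmat N * Fmat N - Fmat N * Hmat N = - Fmat N := by
  have h := congrArg Matrix.conjTranspose (comm_HE N)
  simp only [Matrix.conjTranspose_sub, Matrix.conjTranspose_mul, Hmat_conjTranspose] at h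
  have hF : (Emat N)ᴴ = Fmat N := rfl
  rw [hF] at h
  have h2 : Hmat N * Fmat N - Fmat N * Hmat N = -(Fmat N * Hmat N - Hmat N * Fmat N) := by
    noncomm_ring
  rw [h2, h]

lemma sum_pred (N : ℕ) (p : Fin (N+1)) (f : ℕ → ℂ) :
    (∑ r : Fin (N+1), if (p:ℕ) = (r:ℕ)+1 then f (r:ℕ) else 0)
      = if 1 ≤ (p:ℕ) then f ((p:ℕ)-1) else 0 := by
  split_ifs with h
  · rw [Finset.sum_eq_single (⟨(p:ℕ)-1, by omega⟩ : Fin (N+1))]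
    · rw [if_pos (by simp; omega)]
    · intro r _ hr
      rw [if_neg]
      intro hc; apply hr; apply Fin.ext; simp; omega
    · intro hmem; exact absurd (Finset.mem_univ _) hmem
  · apply Finset.sum_eq_zero; intro r _; rw [if_neg]; omega

lemma sum_succ (N : ℕ) (p : Fin (N+1)) (f : ℕ → ℂ) :
    (∑ r : Fin (N+1), if (r:ℕ) = (p:ℕ)+1 then f (r:ℕ) else 0)
      = if (p:ℕ) < N then f ((p:ℕ)+1) else 0 := by
  split_ifs with h
  · rw [Finset.sum_eq_single (⟨(p:ℕ)+1, by omega⟩ : Fin (N+1))]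
    · rw [if_pos (by simp)]
    · intro r _ hr
      rw [if_neg]
      intro hc; apply hr; apply Fin.ext; simp; omega
    · intro hmem; exact absurd (Finset.mem_univ _) hmem
  · apply Finset.sum_eq_zero; intro r _; rw [if_neg]
    have := r.isLt; omega

lemma comm_EF (N : ℕ) : Emat N * Fmat N - Fmat N * Emat N = (2:ℂ) • Hmat N := by
  ext p q
  rw [Matrix.sub_apply, Matrix.mul_apply, Matrix.mul_apply]
  by_cases hpq : p = q
  · subst hpq
    have h1 : ∀ r : Fin (N+1), Emat N p r * Fmat N r p
        = if (p:ℕ) = (r:ℕ)+1 then ((sq N (r:ℕ) : ℝ) : ℂ) else 0 := by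
      intro r; rw [Emat_apply', Fmat_apply]
      split_ifs with h
      · rw [← Complex.ofReal_mul, Real.mul_self_sqrt (sq_nonneg' (by have := p.isLt; omega))]
      · ring
    have h2 : ∀ r : Fin (N+1), Fmat N p r * Emat N r p
        = if (r:ℕ) = (p:ℕ)+1 then ((sq N (p:ℕ) : ℝ) : ℂ) else 0 := by
      intro r; rw [Emat_apply', Fmat_apply]
      split_ifs with h
      · rw [← Complex.ofReal_mul, Real.mul_self_sqrt (sq_nonneg' (by have := r.isLt; omega))]
      · ring
    rw [Finset.sum_congr rfl (fun r _ => h1 r), Finset.sum_congr rfl (fun r _ => h2 r),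
      sum_pred N p (fun n => ((sq N n : ℝ) : ℂ)), sum_succ N p (fun _ => ((sq N (p:ℕ) : ℝ) : ℂ))]
    have hRHS : ((2:ℂ) • Hmat N) p p = 2 * ((p:ℕ):ℂ) - (N:ℂ) := by
      simp [Hmat]; ring
    rw [hRHS]
    have hpN : (p:ℕ) ≤ N := by have := p.isLt; omega
    split_ifs with hA hB hB
    · -- 1 ≤ p, p < N
      unfold sq
      have : (((p:ℕ)-1:ℕ):ℝ) = ((p:ℕ):ℝ) - 1 := by
        push_cast [Nat.cast_sub hA]; ring
      rw [this]
      push_cast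
      ring
    · -- 1 ≤ p, ¬ p < N : p = N
      have hpN' : (p:ℕ) = N := by omega
      unfold sq
      have : (((p:ℕ)-1:ℕ):ℝ) = ((p:ℕ):ℝ) - 1 := by
        push_cast [Nat.cast_sub hA]; ring
      rw [this, hpN']
      push_cast
      ring
    · -- p = 0, p < N
      have hp0 : (p:ℕ) = 0 := by omega
      unfold sq
      rw [hp0]
      push_cast
      ring
    · -- p = 0 = N
      have hp0 : (p:ℕ) = 0 := by omega
      have hN0 : N = 0 := by omega
      rw [hp0, hN0]
      push_cast
      ring
  · have e1 : (∑ r, Emat N p r * Fmat N r q) = 0 := by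
      apply Finset.sum_eq_zero; intro r _
      rw [Emat_apply', Fmat_apply]
      split_ifs with h1 h2
      · exact absurd (Fin.ext (by omega) : p = q) hpq
      all_goals ring
    have e2 : (∑ r, Fmat N p r * Emat N r q) = 0 := by
      apply Finset.sum_eq_zero; intro r _
      rw [Emat_apply', Fmat_apply]
      split_ifs with h1 h2
      · exact absurd (Fin.ext (by omega) : p = q) hpq
      all_goals ring
    rw [e1, e2]
    simp [Hmat, Matrix.diagonal_apply_ne _ hpq]

end FD
namespace FD
set_option linter.unusedSectionVars false

section adm
variable {n : Type*} [Fintype n] [DecidableEq n]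

/-- a matrix viewed as a vector of its entries -/
def mvec (a : Matrix n n ℂ) : n × n → ℂ := fun pq => a pq.1 pq.2

lemma mvec_inj : Function.Injective (mvec (n := n)) := by
  intro a b h
  ext p q
  exact congrFun h (p, q)

lemma mvec_surj : Function.Surjective (mvec (n := n)) := by
  intro v
  exact ⟨Matrix.of (fun p q => v (p, q)), rfl⟩

lemma mvec_add (a b : Matrix n n ℂ) : mvec (a + b) = mvec a + mvec b := rfl
lemma mvec_smul (c : ℂ) (a : Matrix n n ℂ) : mvec (c • a) = c • mvec a := rfl

lemma mvec_eq_zero_iff {a : Matrix n n ℂ} : mvec a = 0 ↔ a = 0 := by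
  constructor
  · intro h; ext p q; exact congrFun h (p, q)
  · rintro rfl; rfl

lemma mvec_sub (a b : Matrix n n ℂ) : mvec (a - b) = mvec a - mvec b := rfl

lemma adMat_mulVec (X a : Matrix n n ℂ) : adMat X *ᵥ mvec a = mvec (X * a - a * X) := by
  funext pq
  obtain ⟨p, q⟩ := pq
  have hterm : ∀ rs : n × n, adMat X (p, q) rs * mvec a rs
      = (if q = rs.2 then X p rs.1 * a rs.1 rs.2 else 0)
        - (if p = rs.1 then X rs.2 q * a rs.1 rs.2 else 0) := by
    intro rs
    simp only [adMat, mvec]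
    split_ifs <;> ring
  have key : (∑ rs : n × n, (if q = rs.2 then X p rs.1 * a rs.1 rs.2 else 0)) = (X * a) p q := by
    rw [Fintype.sum_prod_type]
    simp [Finset.sum_ite_eq, Matrix.mul_apply]
  have key2 : (∑ rs : n × n, (if p = rs.1 then X rs.2 q * a rs.1 rs.2 else 0)) = (a * X) p q := by
    rw [Fintype.sum_prod_type_right]
    simp only [Finset.sum_ite_eq, Finset.mem_univ, if_true]
    rw [Matrix.mul_apply]
    exact Finset.sum_congr rfl fun s _ => mul_comm _ _
  simp only [Matrix.mulVec, dotProduct]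
  rw [Finset.sum_congr rfl fun rs _ => hterm rs, Finset.sum_sub_distrib, key, key2]
  rfl

lemma matrix_ext_mulVec {ι : Type*} [Fintype ι] [DecidableEq ι] {M P : Matrix ι ι ℂ}
    (h : ∀ v, M *ᵥ v = P *ᵥ v) : M = P := by
  have : Matrix.toLin' M = Matrix.toLin' P := LinearMap.ext fun v => by
    simpa [Matrix.toLin'_apply] using h v
  exact Matrix.toLin'.injective this

lemma adMat_mul_comm (X Y : Matrix n n ℂ) :
    adMat X * adMat Y - adMat Y * adMat X = adMat (X * Y - Y * X) := by
  apply matrix_ext_mulVec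
  intro v
  obtain ⟨a, rfl⟩ := mvec_surj v
  rw [Matrix.sub_mulVec, ← Matrix.mulVec_mulVec (mvec a) (adMat X) (adMat Y),
    ← Matrix.mulVec_mulVec (mvec a) (adMat Y) (adMat X),
    adMat_mulVec, adMat_mulVec, adMat_mulVec, adMat_mulVec, adMat_mulVec, ← mvec_sub]
  congr 1
  noncomm_ring

lemma adMat_add (X Y : Matrix n n ℂ) : adMat (X + Y) = adMat X + adMat Y := by
  ext r c
  simp only [adMat, Matrix.add_apply]
  ring

lemma adMat_sub (X Y : Matrix n n ℂ) : adMat (X - Y) = adMat X - adMat Y := by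
  ext r c
  simp only [adMat, Matrix.sub_apply]
  ring

lemma adMat_smul (c : ℂ) (X : Matrix n n ℂ) : adMat (c • X) = c • adMat X := by
  ext r c'
  simp only [adMat, Matrix.smul_apply, smul_eq_mul]
  ring

end adm

section kron
variable {α β : Type*} [Fintype α] [Fintype β] [DecidableEq α] [DecidableEq β]

lemma kron_mulVec (M : Matrix α α ℂ) (P : Matrix β β ℂ) (v : α → ℂ) (w : β → ℂ) :
    (M ⊗ₖ P) *ᵥ (fun x => v x.1 * w x.2) = fun x => (M *ᵥ v) x.1 * (P *ᵥ w) x.2 := by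
  funext x
  obtain ⟨i, j⟩ := x
  simp only [Matrix.mulVec, dotProduct, Matrix.kroneckerMap_apply, Fintype.sum_prod_type]
  rw [Finset.sum_mul_sum]
  apply Finset.sum_congr rfl
  intro a _
  apply Finset.sum_congr rfl
  intro b _
  ring

lemma kron_sub (A : Matrix α α ℂ) (B C : Matrix β β ℂ) :
    A ⊗ₖ (B - C) = A ⊗ₖ B - A ⊗ₖ C := by
  ext ⟨i, j⟩ ⟨k, l⟩
  simp only [Matrix.kroneckerMap_apply, Matrix.sub_apply, mul_sub]

lemma sub_kron (A B : Matrix α α ℂ) (C : Matrix β β ℂ) :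
    (A - B) ⊗ₖ C = A ⊗ₖ C - B ⊗ₖ C := by
  ext ⟨i, j⟩ ⟨k, l⟩
  simp only [Matrix.kroneckerMap_apply, Matrix.sub_apply, sub_mul]

lemma kron_add (A : Matrix α α ℂ) (B C : Matrix β β ℂ) :
    A ⊗ₖ (B + C) = A ⊗ₖ B + A ⊗ₖ C := by
  ext ⟨i, j⟩ ⟨k, l⟩
  simp only [Matrix.kroneckerMap_apply, Matrix.add_apply, mul_add]

lemma add_kron (A B : Matrix α α ℂ) (C : Matrix β β ℂ) :
    (A + B) ⊗ₖ C = A ⊗ₖ C + B ⊗ₖ C := by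
  ext ⟨i, j⟩ ⟨k, l⟩
  simp only [Matrix.kroneckerMap_apply, Matrix.add_apply, add_mul]

lemma smul_kron (c : ℂ) (A : Matrix α α ℂ) (C : Matrix β β ℂ) :
    (c • A) ⊗ₖ C = c • (A ⊗ₖ C) := by
  ext ⟨i, j⟩ ⟨k, l⟩
  simp only [Matrix.kroneckerMap_apply, Matrix.smul_apply, smul_eq_mul]
  ring

lemma kron_smul (c : ℂ) (A : Matrix α α ℂ) (C : Matrix β β ℂ) :
    A ⊗ₖ (c • C) = c • (A ⊗ₖ C) := by
  ext ⟨i, j⟩ ⟨k, l⟩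
  simp only [Matrix.kroneckerMap_apply, Matrix.smul_apply, smul_eq_mul]
  ring

lemma kron_mul (A B : Matrix α α ℂ) (C D : Matrix β β ℂ) :
    (A ⊗ₖ C) * (B ⊗ₖ D) = (A * B) ⊗ₖ (C * D) := by
  ext ⟨i, j⟩ ⟨k, l⟩
  simp only [Matrix.mul_apply, Matrix.kroneckerMap_apply, Fintype.sum_prod_type]
  rw [Finset.sum_mul_sum]
  apply Finset.sum_congr rfl; intro r _
  apply Finset.sum_congr rfl; intro s _
  ring

end kron

section sl2
variable {ι : Type*} [Fintype ι] [DecidableEq ι]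

lemma weight_lower {h f : Matrix ι ι ℂ} (rel : h * f - f * h = (-2 : ℂ) • f)
    {μ : ℂ} {m : ι → ℂ} (hm : h *ᵥ m = μ • m) (k : ℕ) :
    h *ᵥ (f ^ k *ᵥ m) = (μ - 2 * k) • (f ^ k *ᵥ m) := by
  have hf : h * f = f * h + (-2 : ℂ) • f := by rw [← rel]; noncomm_ring
  induction k with
  | zero => simpa using hm
  | succ k ih =>
    have hX : f ^ (k + 1) *ᵥ m = f *ᵥ (f ^ k *ᵥ m) := by
      rw [pow_succ', ← Matrix.mulVec_mulVec]
    rw [hX, Matrix.mulVec_mulVec _ h f, hf, Matrix.add_mulVec, ← Matrix.mulVec_mulVec _ f h, ih,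
      Matrix.mulVec_smul, Matrix.smul_mulVec, ← add_smul]
    congr 1
    push_cast
    ring

lemma e_lower {h e f : Matrix ι ι ℂ}
    (rel_hf : h * f - f * h = (-2 : ℂ) • f) (rel_ef : e * f - f * e = h)
    {μ : ℂ} {m : ι → ℂ} (hm_h : h *ᵥ m = μ • m) (hm_e : e *ᵥ m = 0) (k : ℕ) :
    e *ᵥ (f ^ (k + 1) *ᵥ m) = (((k : ℂ) + 1) * (μ - k)) • (f ^ k *ᵥ m) := by
  have hef : e * f = f * e + h := by rw [← rel_ef]; noncomm_ring
  induction k with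
  | zero =>
    rw [pow_one, Matrix.mulVec_mulVec m e f, hef, Matrix.add_mulVec,
      ← Matrix.mulVec_mulVec _ f e, hm_e, hm_h, Matrix.mulVec_zero]
    simp only [pow_zero, Matrix.one_mulVec]
    module
  | succ k ih =>
    have hX : f ^ (k + 1 + 1) *ᵥ m = f *ᵥ (f ^ (k + 1) *ᵥ m) := by
      rw [pow_succ', ← Matrix.mulVec_mulVec]
    rw [hX, Matrix.mulVec_mulVec _ e f, hef, Matrix.add_mulVec, ← Matrix.mulVec_mulVec _ f e, ih,
      Matrix.mulVec_smul, Matrix.mulVec_mulVec m f (f ^ k), ← pow_succ',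
      weight_lower rel_hf hm_h (k + 1), ← add_smul]
    congr 1
    push_cast
    ring

lemma ef_pow {h e f : Matrix ι ι ℂ}
    (rel_hf : h * f - f * h = (-2 : ℂ) • f) (rel_ef : e * f - f * e = h)
    {μ : ℂ} {m : ι → ℂ} (hm_h : h *ᵥ m = μ • m) (hm_e : e *ᵥ m = 0) (k : ℕ) :
    e ^ k *ᵥ (f ^ k *ᵥ m) = (∏ i ∈ Finset.range k, (((i : ℂ) + 1) * (μ - i))) • m := by
  induction k with
  | zero => simp
  | succ k ih =>
    have hE : e ^ (k + 1) *ᵥ (f ^ (k + 1) *ᵥ m) = e ^ k *ᵥ (e *ᵥ (f ^ (k + 1) *ᵥ m)) := by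
      rw [pow_succ, ← Matrix.mulVec_mulVec]
    rw [hE, e_lower rel_hf rel_ef hm_h hm_e k, Matrix.mulVec_smul, ih, Finset.prod_range_succ,
      smul_smul, mul_comm]

lemma pow_f_mulVec_ne_zero {h e f : Matrix ι ι ℂ}
    (rel_hf : h * f - f * h = (-2 : ℂ) • f) (rel_ef : e * f - f * e = h)
    {n : ℕ} {m : ι → ℂ} (hm_h : h *ᵥ m = ((n : ℕ) : ℂ) • m) (hm_e : e *ᵥ m = 0) (hm0 : m ≠ 0)
    {k : ℕ} (hk : k ≤ n) : f ^ k *ᵥ m ≠ 0 := by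
  intro hz
  have hp := ef_pow rel_hf rel_ef hm_h hm_e k
  rw [hz, Matrix.mulVec_zero] at hp
  have hcoef : (∏ i ∈ Finset.range k, (((i : ℂ) + 1) * (((n : ℕ) : ℂ) - i))) ≠ 0 := by
    apply Finset.prod_ne_zero_iff.mpr
    intro i hi
    have hi' : i < k := Finset.mem_range.mp hi
    apply mul_ne_zero
    · have hcast : ((i:ℂ) + 1) = ((i+1 : ℕ) : ℂ) := by push_cast; ring
      rw [hcast]
      exact Nat.cast_ne_zero.mpr (Nat.succ_ne_zero i)
    · have hne : (i : ℂ) ≠ ((n : ℕ) : ℂ) := by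
        exact_mod_cast Nat.ne_of_lt (lt_of_lt_of_le hi' hk)
      exact sub_ne_zero_of_ne (Ne.symm hne)
  exact hm0 ((smul_eq_zero.mp hp.symm).resolve_left hcoef)

lemma commute_pow_mulVec {d f : Matrix ι ι ℂ} (hc : d * f = f * d)
    {lam : ℂ} {m : ι → ℂ} (hm : d *ᵥ m = lam • m) (k : ℕ) :
    d *ᵥ (f ^ k *ᵥ m) = lam • (f ^ k *ᵥ m) := by
  induction k with
  | zero => simpa using hm
  | succ k ih =>
    have hX : f ^ (k + 1) *ᵥ m = f *ᵥ (f ^ k *ᵥ m) := by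
      rw [pow_succ', ← Matrix.mulVec_mulVec]
    rw [hX, Matrix.mulVec_mulVec _ d f, hc, ← Matrix.mulVec_mulVec _ f d, ih, Matrix.mulVec_smul]

end sl2

end FD
namespace FD

def sp : Matrix (Fin 2) (Fin 2) ℂ := !![0, 1; 0, 0]
def sm : Matrix (Fin 2) (Fin 2) ℂ := !![0, 0; 1, 0]
def s3 : Matrix (Fin 2) (Fin 2) ℂ := !![1, 0; 0, -1]

lemma sp_mul_sm : sp * sm = !![1, 0; 0, 0] := by
  unfold sp sm; rw [Matrix.mul_fin_two]; norm_num
lemma sm_mul_sp : sm * sp = !![0, 0; 0, 1] := by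
  unfold sp sm; rw [Matrix.mul_fin_two]; norm_num
lemma s3_mul_sp : s3 * sp = sp := by
  unfold sp s3; rw [Matrix.mul_fin_two]; norm_num
lemma sp_mul_s3 : sp * s3 = -sp := by
  unfold sp s3; rw [Matrix.mul_fin_two]
  ext i j; fin_cases i <;> fin_cases j <;> simp [sp]
lemma s3_mul_sm : s3 * sm = -sm := by
  unfold sm s3; rw [Matrix.mul_fin_two]
  ext i j; fin_cases i <;> fin_cases j <;> simp [sm]
lemma sm_mul_s3 : sm * s3 = sm := by
  unfold sm s3; rw [Matrix.mul_fin_two]; norm_num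
lemma sp_mul_sp : sp * sp = 0 := by
  unfold sp; rw [Matrix.mul_fin_two]
  ext i j; fin_cases i <;> fin_cases j <;> simp
lemma sm_mul_sm : sm * sm = 0 := by
  unfold sm; rw [Matrix.mul_fin_two]
  ext i j; fin_cases i <;> fin_cases j <;> simp
lemma spsm_sub : sp * sm - sm * sp = s3 := by
  rw [sp_mul_sm, sm_mul_sp]
  ext i j; fin_cases i <;> fin_cases j <;> simp [s3]

section big
variable (N : ℕ)

def Et : Matrix ((Fin (N+1) × Fin (N+1)) × Fin 2) ((Fin (N+1) × Fin (N+1)) × Fin 2) ℂ :=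
  adMat (Emat N) ⊗ₖ 1 + 1 ⊗ₖ sp

def Ft : Matrix ((Fin (N+1) × Fin (N+1)) × Fin 2) ((Fin (N+1) × Fin (N+1)) × Fin 2) ℂ :=
  adMat (Fmat N) ⊗ₖ 1 + 1 ⊗ₖ sm

def Wt : Matrix ((Fin (N+1) × Fin (N+1)) × Fin 2) ((Fin (N+1) × Fin (N+1)) × Fin 2) ℂ :=
  (2:ℂ) • (adMat (Hmat N) ⊗ₖ 1) + 1 ⊗ₖ s3

lemma pauli0_eq : pauli 0 = sp + sm := by
  ext i j; fin_cases i <;> fin_cases j <;> simp [pauli, sp, sm]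
lemma pauli1_eq : pauli 1 = (-Complex.I) • sp + Complex.I • sm := by
  ext i j; fin_cases i <;> fin_cases j <;> simp [pauli, sp, sm]
lemma pauli2_eq : pauli 2 = s3 := by
  ext i j; fin_cases i <;> fin_cases j <;> simp [pauli, s3]

lemma fullDirac_eq : fullDirac N
    = 1 + adMat (Emat N) ⊗ₖ sm + adMat (Fmat N) ⊗ₖ sp + adMat (Hmat N) ⊗ₖ s3 := by
  have hco : (1 / (2 * Complex.I) : ℂ) = -Complex.I / 2 := by
    rw [div_eq_div_iff (by simp [Complex.I_ne_zero]) two_ne_zero]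
    linear_combination (2:ℂ) * Complex.I_mul_I
  have j0 : Jmat N 0 = (1 / 2 : ℂ) • (Emat N + Fmat N) := rfl
  have j1 : Jmat N 1 = (1 / (2 * Complex.I) : ℂ) • (Emat N - Fmat N) := rfl
  have j2 : Jmat N 2 = Hmat N := rfl
  unfold fullDirac
  rw [Fin.sum_univ_three, j0, j1, j2, pauli0_eq, pauli1_eq, pauli2_eq, hco,
    adMat_smul, adMat_smul, adMat_add, adMat_sub, smul_kron, smul_kron,
    add_kron, kron_add, kron_add, kron_add, kron_smul, kron_smul, sub_kron, sub_kron]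
  match_scalars <;> first
    | ring1
    | linear_combination (1/2 : ℂ) * Complex.I_mul_I
    | linear_combination (-1/2 : ℂ) * Complex.I_mul_I

end big

end FD
namespace FD
set_option linter.unusedSectionVars false

section kron2
variable {α β : Type*} [Fintype α] [Fintype β] [DecidableEq α] [DecidableEq β]

lemma neg_kron (A : Matrix α α ℂ) (B : Matrix β β ℂ) : (-A) ⊗ₖ B = -(A ⊗ₖ B) := by
  ext ⟨i, j⟩ ⟨k, l⟩
  simp [Matrix.kroneckerMap_apply]

lemma adMat_neg {n : Type*} [Fintype n] [DecidableEq n] (X : Matrix n n ℂ) :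
    adMat (-X) = - adMat X := by
  ext r c
  simp only [adMat, Matrix.neg_apply]
  ring

end kron2

lemma r2 : s3 * sp - sp * s3 = (2:ℂ) • sp := by
  rw [s3_mul_sp, sp_mul_s3]
  module

lemma r3 : s3 * sm - sm * s3 = (-2:ℂ) • sm := by
  rw [s3_mul_sm, sm_mul_s3]
  module

section comm
variable (N : ℕ)

lemma K1 : adMat (Hmat N) * adMat (Emat N) - adMat (Emat N) * adMat (Hmat N) = adMat (Emat N) := by
  rw [adMat_mul_comm, comm_HE]

lemma K2 : adMat (Hmat N) * adMat (Fmat N) - adMat (Fmat N) * adMat (Hmat N)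
    = - adMat (Fmat N) := by
  rw [adMat_mul_comm, comm_HF, adMat_neg]

lemma K3 : adMat (Emat N) * adMat (Fmat N) - adMat (Fmat N) * adMat (Emat N)
    = (2:ℂ) • adMat (Hmat N) := by
  rw [adMat_mul_comm, comm_EF, adMat_smul]

lemma c3 : Et N * Ft N - Ft N * Et N = Wt N := by
  have expand : Et N * Ft N - Ft N * Et N
      = ((adMat (Emat N) * adMat (Fmat N)) ⊗ₖ (1 : Matrix (Fin 2) (Fin 2) ℂ)
          - (adMat (Fmat N) * adMat (Emat N)) ⊗ₖ (1 : Matrix (Fin 2) (Fin 2) ℂ))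
        + ((1 : Matrix (Fin (N+1) × Fin (N+1)) (Fin (N+1) × Fin (N+1)) ℂ) ⊗ₖ (sp * sm)
          - (1 : Matrix (Fin (N+1) × Fin (N+1)) (Fin (N+1) × Fin (N+1)) ℂ) ⊗ₖ (sm * sp)) := by
    unfold Et Ft
    simp only [add_mul, mul_add, kron_mul, Matrix.one_mul, Matrix.mul_one]
    abel
  rw [expand, ← sub_kron, ← kron_sub, K3, spsm_sub, smul_kron]
  rfl

lemma c1 : Wt N * Et N - Et N * Wt N = (2:ℂ) • Et N := by
  have expand : Wt N * Et N - Et N * Wt N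
      = (2:ℂ) • ((adMat (Hmat N) * adMat (Emat N)) ⊗ₖ (1 : Matrix (Fin 2) (Fin 2) ℂ))
        - (2:ℂ) • ((adMat (Emat N) * adMat (Hmat N)) ⊗ₖ (1 : Matrix (Fin 2) (Fin 2) ℂ))
        + ((1 : Matrix (Fin (N+1) × Fin (N+1)) (Fin (N+1) × Fin (N+1)) ℂ) ⊗ₖ (s3 * sp)
          - (1 : Matrix (Fin (N+1) × Fin (N+1)) (Fin (N+1) × Fin (N+1)) ℂ) ⊗ₖ (sp * s3)) := by
    unfold Wt Et
    simp only [add_mul, mul_add, kron_mul, Matrix.one_mul, Matrix.mul_one,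
      smul_mul_assoc, mul_smul_comm]
    module
  rw [expand, ← smul_sub, ← sub_kron, K1, ← kron_sub, r2, kron_smul]
  unfold Et
  module

lemma c2 : Wt N * Ft N - Ft N * Wt N = (-2:ℂ) • Ft N := by
  have expand : Wt N * Ft N - Ft N * Wt N
      = (2:ℂ) • ((adMat (Hmat N) * adMat (Fmat N)) ⊗ₖ (1 : Matrix (Fin 2) (Fin 2) ℂ))
        - (2:ℂ) • ((adMat (Fmat N) * adMat (Hmat N)) ⊗ₖ (1 : Matrix (Fin 2) (Fin 2) ℂ))
        + ((1 : Matrix (Fin (N+1) × Fin (N+1)) (Fin (N+1) × Fin (N+1)) ℂ) ⊗ₖ (s3 * sm)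
          - (1 : Matrix (Fin (N+1) × Fin (N+1)) (Fin (N+1) × Fin (N+1)) ℂ) ⊗ₖ (sm * s3)) := by
    unfold Wt Ft
    simp only [add_mul, mul_add, kron_mul, Matrix.one_mul, Matrix.mul_one,
      smul_mul_assoc, mul_smul_comm]
    module
  rw [expand, ← smul_sub, ← sub_kron, K2, ← kron_sub, r3, kron_smul, neg_kron]
  unfold Ft
  module

lemma c4 : fullDirac N * Ft N = Ft N * fullDirac N := by
  rw [← sub_eq_zero, fullDirac_eq]
  have expand :
      (1 + adMat (Emat N) ⊗ₖ sm + adMat (Fmat N) ⊗ₖ sp + adMat (Hmat N) ⊗ₖ s3) * Ft N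
      - Ft N * (1 + adMat (Emat N) ⊗ₖ sm + adMat (Fmat N) ⊗ₖ sp + adMat (Hmat N) ⊗ₖ s3)
      = ((adMat (Emat N) * adMat (Fmat N)) ⊗ₖ sm - (adMat (Fmat N) * adMat (Emat N)) ⊗ₖ sm)
        + (adMat (Fmat N) ⊗ₖ (sp * sm) - adMat (Fmat N) ⊗ₖ (sm * sp))
        + ((adMat (Hmat N) * adMat (Fmat N)) ⊗ₖ s3
            - (adMat (Fmat N) * adMat (Hmat N)) ⊗ₖ s3)
        + (adMat (Hmat N) ⊗ₖ (s3 * sm) - adMat (Hmat N) ⊗ₖ (sm * s3)) := by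
    unfold Ft
    simp only [add_mul, mul_add, kron_mul, Matrix.one_mul, Matrix.mul_one, one_mul, mul_one]
    abel
  rw [expand, ← sub_kron, K3, ← kron_sub, spsm_sub, ← sub_kron, K2, ← kron_sub, r3,
    smul_kron, neg_kron, kron_smul]
  module

end comm

end FD
namespace FD
set_option linter.unusedSectionVars false

def tens {N : ℕ} (a : Matrix (Fin (N+1)) (Fin (N+1)) ℂ) (w : Fin 2 → ℂ) :
    (Fin (N+1) × Fin (N+1)) × Fin 2 → ℂ := fun x => mvec a x.1 * w x.2

def ep : Fin 2 → ℂ := ![1, 0]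
def em : Fin 2 → ℂ := ![0, 1]

lemma sp_ep : sp *ᵥ ep = 0 := by
  funext s; fin_cases s <;>
    simp [sp, ep, Matrix.mulVec, dotProduct, Fin.sum_univ_two]
lemma sp_em : sp *ᵥ em = ep := by
  funext s; fin_cases s <;>
    simp [sp, ep, em, Matrix.mulVec, dotProduct, Fin.sum_univ_two]
lemma sm_ep : sm *ᵥ ep = em := by
  funext s; fin_cases s <;>
    simp [sm, ep, em, Matrix.mulVec, dotProduct, Fin.sum_univ_two]
lemma sm_em : sm *ᵥ em = 0 := by
  funext s; fin_cases s <;>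
    simp [sm, em, Matrix.mulVec, dotProduct, Fin.sum_univ_two]
lemma s3_ep : s3 *ᵥ ep = ep := by
  funext s; fin_cases s <;>
    simp [s3, ep, Matrix.mulVec, dotProduct, Fin.sum_univ_two]
lemma s3_em : s3 *ᵥ em = (-1 : ℂ) • em := by
  funext s; fin_cases s <;>
    simp [s3, em, Matrix.mulVec, dotProduct, Fin.sum_univ_two]

section tensor
variable {N : ℕ}

lemma adk_mulVec (X : Matrix (Fin (N+1)) (Fin (N+1)) ℂ) (P : Matrix (Fin 2) (Fin 2) ℂ)
    (a : Matrix (Fin (N+1)) (Fin (N+1)) ℂ) (w : Fin 2 → ℂ) :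
    (adMat X ⊗ₖ P) *ᵥ tens a w = tens (X * a - a * X) (P *ᵥ w) := by
  unfold tens
  rw [kron_mulVec, adMat_mulVec]

lemma onek_mulVec (P : Matrix (Fin 2) (Fin 2) ℂ) (a : Matrix (Fin (N+1)) (Fin (N+1)) ℂ)
    (w : Fin 2 → ℂ) :
    ((1 : Matrix (Fin (N+1) × Fin (N+1)) (Fin (N+1) × Fin (N+1)) ℂ) ⊗ₖ P) *ᵥ tens a w
      = tens a (P *ᵥ w) := by
  unfold tens
  rw [kron_mulVec, Matrix.one_mulVec]

lemma tens_smul_left (c : ℂ) (a : Matrix (Fin (N+1)) (Fin (N+1)) ℂ) (w : Fin 2 → ℂ) :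
    tens (c • a) w = c • tens a w := by
  funext x; simp [tens, mvec, mul_assoc]

lemma tens_smul_right (c : ℂ) (a : Matrix (Fin (N+1)) (Fin (N+1)) ℂ) (w : Fin 2 → ℂ) :
    tens a (c • w) = c • tens a w := by
  funext x; simp [tens, mvec]; ring

lemma tens_zero_left (w : Fin 2 → ℂ) : tens (0 : Matrix (Fin (N+1)) (Fin (N+1)) ℂ) w = 0 := by
  funext x; simp [tens, mvec]

lemma tens_zero_right (a : Matrix (Fin (N+1)) (Fin (N+1)) ℂ) : tens a (0 : Fin 2 → ℂ) = 0 := by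
  funext x; simp [tens]

lemma tens_add_left (a b : Matrix (Fin (N+1)) (Fin (N+1)) ℂ) (w : Fin 2 → ℂ) :
    tens (a + b) w = tens a w + tens b w := by
  funext x; simp [tens, mvec, add_mul]

end tensor

section epow
variable {N : ℕ}

lemma adH_Epow (l : ℕ) :
    Hmat N * (Emat N ^ l) - (Emat N ^ l) * Hmat N = (l : ℂ) • (Emat N ^ l) := by
  induction l with
  | zero => simp
  | succ l ih =>
    have key : Hmat N * Emat N ^ (l+1) - Emat N ^ (l+1) * Hmat N
        = (Hmat N * Emat N - Emat N * Hmat N) * Emat N ^ l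
          + Emat N * (Hmat N * Emat N ^ l - Emat N ^ l * Hmat N) := by
      rw [pow_succ']
      noncomm_ring
    rw [key, comm_HE, ih, mul_smul_comm, ← pow_succ']
    push_cast
    module

lemma adE_Epow (l : ℕ) : Emat N * Emat N ^ l - Emat N ^ l * Emat N = 0 := by
  rw [sub_eq_zero, ← pow_succ', ← pow_succ]

def v1 (N l : ℕ) : Matrix (Fin (N+1)) (Fin (N+1)) ℂ :=
  Fmat N * Emat N ^ l - Emat N ^ l * Fmat N

lemma adH_v1 (l : ℕ) :
    Hmat N * v1 N l - v1 N l * Hmat N = ((l : ℂ) - 1) • v1 N l := by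
  have key : Hmat N * v1 N l - v1 N l * Hmat N
      = (Hmat N * Fmat N - Fmat N * Hmat N) * Emat N ^ l
        - Emat N ^ l * (Hmat N * Fmat N - Fmat N * Hmat N)
        + Fmat N * (Hmat N * Emat N ^ l - Emat N ^ l * Hmat N)
        - (Hmat N * Emat N ^ l - Emat N ^ l * Hmat N) * Fmat N := by
    unfold v1
    noncomm_ring
  rw [key, comm_HF, adH_Epow, mul_smul_comm, smul_mul_assoc, neg_mul, mul_neg]
  unfold v1
  module

lemma adE_v1 (l : ℕ) :
    Emat N * v1 N l - v1 N l * Emat N = (2 * (l : ℂ)) • (Emat N ^ l) := by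
  have key : Emat N * v1 N l - v1 N l * Emat N
      = (Emat N * Fmat N - Fmat N * Emat N) * Emat N ^ l
        - Emat N ^ l * (Emat N * Fmat N - Fmat N * Emat N)
        + Fmat N * (Emat N * Emat N ^ l - Emat N ^ l * Emat N)
        - (Emat N * Emat N ^ l - Emat N ^ l * Emat N) * Fmat N := by
    unfold v1
    noncomm_ring
  rw [key, comm_EF, adE_Epow, mul_zero, zero_mul, smul_mul_assoc, mul_smul_comm]
  have h2 : Hmat N * Emat N ^ l = (l : ℂ) • Emat N ^ l + Emat N ^ l * Hmat N :=
    sub_eq_iff_eq_add.mp (adH_Epow l)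
  rw [h2]
  module

lemma adF_Epow (l : ℕ) : Fmat N * Emat N ^ l - Emat N ^ l * Fmat N = v1 N l := rfl

end epow

end FD
namespace FD
set_option linter.unusedSectionVars false

section prim
variable (N : ℕ)

lemma Wt_tens (a : Matrix (Fin (N+1)) (Fin (N+1)) ℂ) (w : Fin 2 → ℂ) :
    Wt N *ᵥ tens a w
      = (2:ℂ) • tens (Hmat N * a - a * Hmat N) w + tens a (s3 *ᵥ w) := by
  unfold Wt
  rw [Matrix.add_mulVec, Matrix.smul_mulVec, adk_mulVec, onek_mulVec, Matrix.one_mulVec]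

lemma Et_tens (a : Matrix (Fin (N+1)) (Fin (N+1)) ℂ) (w : Fin 2 → ℂ) :
    Et N *ᵥ tens a w
      = tens (Emat N * a - a * Emat N) w + tens a (sp *ᵥ w) := by
  unfold Et
  rw [Matrix.add_mulVec, adk_mulVec, onek_mulVec, Matrix.one_mulVec]

lemma Ft_tens (a : Matrix (Fin (N+1)) (Fin (N+1)) ℂ) (w : Fin 2 → ℂ) :
    Ft N *ᵥ tens a w
      = tens (Fmat N * a - a * Fmat N) w + tens a (sm *ᵥ w) := by
  unfold Ft
  rw [Matrix.add_mulVec, adk_mulVec, onek_mulVec, Matrix.one_mulVec]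

lemma D_tens (a : Matrix (Fin (N+1)) (Fin (N+1)) ℂ) (w : Fin 2 → ℂ) :
    fullDirac N *ᵥ tens a w
      = tens a w + tens (Emat N * a - a * Emat N) (sm *ᵥ w)
        + tens (Fmat N * a - a * Fmat N) (sp *ᵥ w)
        + tens (Hmat N * a - a * Hmat N) (s3 *ᵥ w) := by
  rw [fullDirac_eq, Matrix.add_mulVec, Matrix.add_mulVec, Matrix.add_mulVec,
    Matrix.one_mulVec, adk_mulVec, adk_mulVec, adk_mulVec]

def m1 (l : ℕ) : (Fin (N+1) × Fin (N+1)) × Fin 2 → ℂ := tens (Emat N ^ l) ep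

def m2 (l : ℕ) : (Fin (N+1) × Fin (N+1)) × Fin 2 → ℂ :=
  tens (v1 N l) ep - (2 * (l:ℂ)) • tens (Emat N ^ l) em

lemma Wt_m1 (l : ℕ) : Wt N *ᵥ m1 N l = (2 * (l:ℂ) + 1) • m1 N l := by
  unfold m1
  rw [Wt_tens, adH_Epow, s3_ep, tens_smul_left]
  module

lemma Et_m1 (l : ℕ) : Et N *ᵥ m1 N l = 0 := by
  unfold m1
  rw [Et_tens, adE_Epow, sp_ep, tens_zero_left, tens_zero_right, add_zero]

lemma D_m1 (l : ℕ) : fullDirac N *ᵥ m1 N l = ((l:ℂ) + 1) • m1 N l := by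
  unfold m1
  rw [D_tens, adE_Epow, adF_Epow, adH_Epow, sm_ep, sp_ep, s3_ep, tens_zero_left,
    tens_zero_right, tens_smul_left]
  module

lemma Wt_m2 (l : ℕ) : Wt N *ᵥ m2 N l = (2 * (l:ℂ) - 1) • m2 N l := by
  unfold m2
  rw [Matrix.mulVec_sub, Matrix.mulVec_smul, Wt_tens, Wt_tens, adH_Epow, adH_v1,
    s3_ep, s3_em, tens_smul_left, tens_smul_left, tens_smul_right]
  module

lemma Et_m2 (l : ℕ) : Et N *ᵥ m2 N l = 0 := by
  unfold m2
  rw [Matrix.mulVec_sub, Matrix.mulVec_smul, Et_tens, Et_tens, adE_v1, adE_Epow,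
    sp_ep, sp_em, tens_smul_left, tens_zero_left, tens_zero_right]
  module

lemma D_m2 (l : ℕ) : fullDirac N *ᵥ m2 N l = (-(l:ℂ)) • m2 N l := by
  unfold m2
  rw [Matrix.mulVec_sub, Matrix.mulVec_smul, D_tens, D_tens, adE_v1, adE_Epow,
    adH_v1, adH_Epow, adF_Epow, sm_ep, sm_em, sp_ep, sp_em, s3_ep, s3_em,
    tens_smul_left, tens_smul_left, tens_smul_left, tens_smul_right,
    tens_zero_left, tens_zero_right]
  module

lemma Epow_supp (l : ℕ) (p q : Fin (N+1)) (h : (p:ℕ) ≠ (q:ℕ) + l) : (Emat N ^ l) p q = 0 := by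
  induction l generalizing q with
  | zero =>
    apply Matrix.one_apply_ne
    intro hc
    exact h (by rw [hc]; omega)
  | succ l ih =>
    rw [pow_succ, Matrix.mul_apply]
    apply Finset.sum_eq_zero
    intro r _
    by_cases hr : (r:ℕ) = (q:ℕ) + 1
    · rw [ih r (by omega), zero_mul]
    · rw [Emat_apply', if_neg hr, mul_zero]

lemma Epow_pos (l : ℕ) : ∀ q : Fin (N+1), ∀ h : (q:ℕ) + l ≤ N,
    ∃ c : ℝ, 0 < c ∧ (Emat N ^ l) ⟨(q:ℕ) + l, by omega⟩ q = (c:ℂ) := by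
  induction l with
  | zero =>
    intro q h
    refine ⟨1, one_pos, ?_⟩
    have hq : (⟨(q:ℕ) + 0, by omega⟩ : Fin (N+1)) = q := by
      apply Fin.ext; simp
    rw [hq, pow_zero, Matrix.one_apply_eq]
    norm_num
  | succ l ih =>
    intro q h
    obtain ⟨c, hc, he⟩ := ih q (by omega)
    have hsq : 0 < sq N ((q:ℕ) + l) := by
      unfold sq
      have hlt : (((q:ℕ) + l : ℕ) : ℝ) < (N:ℝ) := by
        exact_mod_cast (by omega : (q:ℕ) + l < N)
      push_cast at hlt ⊢
      nlinarith [hlt, (by positivity : (0:ℝ) ≤ ((q:ℕ):ℝ) + (l:ℝ))]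
    have hgoal : (Emat N ^ (l+1)) ⟨(q:ℕ) + (l+1), by omega⟩ q
        = Emat N ⟨(q:ℕ) + (l+1), by omega⟩ ⟨(q:ℕ) + l, by omega⟩
          * (Emat N ^ l) ⟨(q:ℕ) + l, by omega⟩ q := by
      rw [pow_succ', Matrix.mul_apply]
      apply Finset.sum_eq_single
      · intro r _ hr
        rw [Epow_supp N l r q (by
          intro hv
          apply hr
          apply Fin.ext
          simpa using hv), mul_zero]
      · intro hmem; exact absurd (Finset.mem_univ _) hmem
    refine ⟨Real.sqrt (sq N ((q:ℕ) + l)) * c, mul_pos (Real.sqrt_pos.mpr hsq) hc, ?_⟩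
    rw [hgoal, he, Emat_apply', if_pos (by simp; omega), ← Complex.ofReal_mul]

lemma Epow_pos' (l : ℕ) (hl : l ≤ N) :
    ∃ c : ℝ, 0 < c ∧ (Emat N ^ l) ⟨l, by omega⟩ ⟨0, Nat.succ_pos N⟩ = (c:ℂ) := by
  obtain ⟨c, hc, he⟩ := Epow_pos N l ⟨0, Nat.succ_pos N⟩ (by simpa using hl)
  refine ⟨c, hc, ?_⟩
  convert he using 3
  simp

lemma m1_ne (l : ℕ) (hl : l ≤ N) : m1 N l ≠ 0 := by
  obtain ⟨c, hc, he⟩ := Epow_pos' N l hl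
  intro h0
  have hx := congrFun h0 (((⟨l, by omega⟩ : Fin (N+1)), (⟨0, Nat.succ_pos N⟩ : Fin (N+1))),
    (0 : Fin 2))
  simp only [m1, tens, mvec, Pi.zero_apply] at hx
  rw [he] at hx
  simp [ep] at hx
  exact hc.ne' (by exact_mod_cast hx)

lemma v1_entry (l : ℕ) (h1 : 1 ≤ l) (hl : l ≤ N) :
    ∃ c : ℝ, 0 < c ∧ v1 N l ⟨l - 1, by omega⟩ ⟨0, Nat.succ_pos N⟩ = (c:ℂ) := by
  obtain ⟨c, hc, he⟩ := Epow_pos' N l hl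
  have hFE : (Fmat N * Emat N ^ l) (⟨l - 1, by omega⟩ : Fin (N+1))
      (⟨0, Nat.succ_pos N⟩ : Fin (N+1))
      = (Real.sqrt (sq N (l - 1)) : ℂ) * (c:ℂ) := by
    rw [Matrix.mul_apply]
    rw [Finset.sum_eq_single (⟨l, by omega⟩ : Fin (N+1))]
    · rw [Fmat_apply, if_pos (by simp; omega), he]
    · intro r _ hr
      rw [Epow_supp N l r _ (by
        intro hv
        apply hr
        apply Fin.ext
        simpa using hv), mul_zero]
    · intro hmem; exact absurd (Finset.mem_univ _) hmem
  have hEF : (Emat N ^ l * Fmat N) (⟨l - 1, by omega⟩ : Fin (N+1))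
      (⟨0, Nat.succ_pos N⟩ : Fin (N+1)) = 0 := by
    rw [Matrix.mul_apply]
    apply Finset.sum_eq_zero
    intro r _
    rw [Fmat_apply, if_neg (by simp), mul_zero]
  have hsq : 0 < sq N (l - 1) := by
    unfold sq
    have hlt : (((l - 1 : ℕ)) : ℝ) < (N:ℝ) := by
      exact_mod_cast (by omega : l - 1 < N)
    nlinarith [hlt, (by positivity : (0:ℝ) ≤ ((l - 1 : ℕ) : ℝ))]
  refine ⟨Real.sqrt (sq N (l - 1)) * c, mul_pos (Real.sqrt_pos.mpr hsq) hc, ?_⟩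
  unfold v1
  rw [Matrix.sub_apply, hFE, hEF, sub_zero, Complex.ofReal_mul]

lemma m2_ne (l : ℕ) (h1 : 1 ≤ l) (hl : l ≤ N) : m2 N l ≠ 0 := by
  obtain ⟨c, hc, hv⟩ := v1_entry N l h1 hl
  intro h0
  have hx := congrFun h0 (((⟨l - 1, by omega⟩ : Fin (N+1)),
    (⟨0, Nat.succ_pos N⟩ : Fin (N+1))), (0 : Fin 2))
  simp only [m2, Pi.sub_apply, Pi.smul_apply, tens, mvec, smul_eq_mul, Pi.zero_apply] at hx
  rw [hv] at hx
  simp [ep, em] at hx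
  exact hc.ne' (by exact_mod_cast hx)

end prim

end FD
namespace FD
set_option linter.unusedSectionVars false

lemma charpoly_diagonal {ι : Type*} [Fintype ι] [DecidableEq ι] (d : ι → ℂ) :
    (Matrix.diagonal d).charpoly = ∏ i, (X - C (d i)) := by
  have h : Matrix.charmatrix (Matrix.diagonal d)
      = Matrix.diagonal (fun i => (X : Polynomial ℂ) - C (d i)) := by
    unfold Matrix.charmatrix
    rw [Matrix.scalar_apply, RingHom.mapMatrix_apply, Matrix.diagonal_map (by simp),
      ← Matrix.diagonal_sub]
  unfold Matrix.charpoly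
  rw [h, Matrix.det_diagonal]

section assembly
variable (N : ℕ)

abbrev TIdx := (Σ l : Fin (N+1), Fin (2 * (l:ℕ) + 2)) ⊕ (Σ l : Fin N, Fin (2 * (l:ℕ) + 2))

def lam : TIdx N → ℤ
  | .inl ⟨l, _⟩ => (l:ℤ) + 1
  | .inr ⟨l, _⟩ => -((l:ℤ) + 1)

def wgt : TIdx N → ℤ
  | .inl ⟨l, k⟩ => 2*(l:ℤ) + 1 - 2*(k:ℤ)
  | .inr ⟨l, k⟩ => 2*(l:ℤ) + 1 - 2*(k:ℤ)

def bvec : TIdx N → ((Fin (N+1) × Fin (N+1)) × Fin 2 → ℂ)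
  | .inl ⟨l, k⟩ => Ft N ^ (k:ℕ) *ᵥ m1 N (l:ℕ)
  | .inr ⟨l, k⟩ => Ft N ^ (k:ℕ) *ᵥ m2 N ((l:ℕ)+1)

lemma D_bvec (t : TIdx N) : fullDirac N *ᵥ bvec N t = ((lam N t : ℤ) : ℂ) • bvec N t := by
  rcases t with ⟨l, k⟩ | ⟨l, k⟩
  · have hc : (((lam N (Sum.inl ⟨l, k⟩) : ℤ)) : ℂ) = ((l:ℕ):ℂ) + 1 := by
      simp only [lam]; push_cast; ring
    rw [hc]
    exact commute_pow_mulVec (c4 N) (D_m1 N (l:ℕ)) (k:ℕ)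
  · have hc : (((lam N (Sum.inr ⟨l, k⟩) : ℤ)) : ℂ) = -(((l:ℕ):ℂ) + 1) := by
      simp only [lam]; push_cast; ring
    rw [hc]
    have := commute_pow_mulVec (c4 N) (D_m2 N ((l:ℕ)+1)) (k:ℕ)
    rw [show (-((((l:ℕ)+1 : ℕ)):ℂ)) = -(((l:ℕ):ℂ) + 1) from by push_cast; ring] at this
    exact this

lemma W_bvec (t : TIdx N) : Wt N *ᵥ bvec N t = ((wgt N t : ℤ) : ℂ) • bvec N t := by
  rcases t with ⟨l, k⟩ | ⟨l, k⟩
  · have hc : (((wgt N (Sum.inl ⟨l, k⟩) : ℤ)) : ℂ) = (2*((l:ℕ):ℂ) + 1) - 2*((k:ℕ):ℂ) := by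
      simp only [wgt]; push_cast; ring
    rw [hc]
    exact weight_lower (c2 N) (Wt_m1 N (l:ℕ)) (k:ℕ)
  · have hc : (((wgt N (Sum.inr ⟨l, k⟩) : ℤ)) : ℂ)
        = (2*(((l:ℕ)+1 : ℕ):ℂ) - 1) - 2*((k:ℕ):ℂ) := by
      simp only [wgt]; push_cast; ring
    rw [hc]
    exact weight_lower (c2 N) (Wt_m2 N ((l:ℕ)+1)) (k:ℕ)

lemma bvec_ne (t : TIdx N) : bvec N t ≠ 0 := by
  rcases t with ⟨l, k⟩ | ⟨l, k⟩
  · have hm_h : Wt N *ᵥ m1 N (l:ℕ) = (((2*(l:ℕ)+1 : ℕ)) : ℂ) • m1 N (l:ℕ) := by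
      rw [Wt_m1]
      congr 1
      push_cast
      ring
    exact pow_f_mulVec_ne_zero (c2 N) (c3 N) hm_h (Et_m1 N (l:ℕ))
      (m1_ne N (l:ℕ) (by have := l.isLt; omega)) (by have := k.isLt; omega)
  · have hm_h : Wt N *ᵥ m2 N ((l:ℕ)+1) = (((2*(l:ℕ)+1 : ℕ)) : ℂ) • m2 N ((l:ℕ)+1) := by
      rw [Wt_m2]
      congr 1
      push_cast
      ring
    exact pow_f_mulVec_ne_zero (c2 N) (c3 N) hm_h (Et_m2 N ((l:ℕ)+1))
      (m2_ne N ((l:ℕ)+1) (by omega) (by have := l.isLt; omega)) (by have := k.isLt; omega)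

def Smat : Matrix ((Fin (N+1) × Fin (N+1)) × Fin 2) ((Fin (N+1) × Fin (N+1)) × Fin 2) ℂ :=
  ((4*(N:ℂ) + 4) : ℂ) • fullDirac N + Wt N

lemma S_bvec (t : TIdx N) : Matrix.toLin' (Smat N) (bvec N t)
    = ((((4*(N:ℤ)+4) * lam N t + wgt N t : ℤ)) : ℂ) • bvec N t := by
  rw [Matrix.toLin'_apply]
  unfold Smat
  rw [Matrix.add_mulVec, Matrix.smul_mulVec, D_bvec, W_bvec, smul_smul, ← add_smul]
  congr 1
  push_cast
  ring

lemma int_sep {M a b c d : ℤ} (hM : 0 < M) (h : M*a + b = M*c + d)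
    (hb1 : -M < 2*b) (hb2 : 2*b < M) (hd1 : -M < 2*d) (hd2 : 2*d < M) : a = c ∧ b = d := by
  have key : M*a - M*c = d - b := by linarith
  have hac : a = c := by
    rcases lt_trichotomy a c with hlt | heq | hgt
    · exfalso
      have h1 : M*1 ≤ M*(c-a) := mul_le_mul_of_nonneg_left (by omega) hM.le
      have h2 : M*(c-a) = M*c - M*a := by ring
      linarith
    · exact heq
    · exfalso
      have h1 : M*1 ≤ M*(a-c) := mul_le_mul_of_nonneg_left (by omega) hM.le
      have h2 : M*(a-c) = M*a - M*c := by ring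
      linarith
  subst hac
  exact ⟨rfl, by linarith⟩

lemma key_inj : Function.Injective (fun t : TIdx N => (4*(N:ℤ)+4) * lam N t + wgt N t) := by
  intro t t' h
  simp only at h
  have hM : (0:ℤ) < 4*(N:ℤ)+4 := by positivity
  have hwb : ∀ u : TIdx N, -(4*(N:ℤ)+4) < 2 * wgt N u ∧ 2 * wgt N u < 4*(N:ℤ)+4 := by
    intro u
    rcases u with ⟨l, k⟩ | ⟨l, k⟩ <;> simp only [wgt] <;>
      exact ⟨by have := l.isLt; have := k.isLt; omega, by have := l.isLt; have := k.isLt; omega⟩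
  obtain ⟨h1, h2⟩ := int_sep hM h (hwb t).1 (hwb t).2 (hwb t').1 (hwb t').2
  rcases t with ⟨l, k⟩ | ⟨l, k⟩ <;> rcases t' with ⟨l', k'⟩ | ⟨l', k'⟩ <;>
      simp only [lam, wgt] at h1 h2
  · have hll : l = l' := Fin.ext (by omega)
    subst hll
    have hkk : k = k' := Fin.ext (by omega)
    rw [hkk]
  · exfalso; have := l.isLt; have := l'.isLt; omega
  · exfalso; have := l.isLt; have := l'.isLt; omega
  · have hll : l = l' := Fin.ext (by omega)
    subst hll
    have hkk : k = k' := Fin.ext (by omega)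
    rw [hkk]

lemma bvec_li : LinearIndependent ℂ (bvec N) := by
  apply Module.End.eigenvectors_linearIndependent' (Matrix.toLin' (Smat N))
    (fun t => ((((4*(N:ℤ)+4) * lam N t + wgt N t : ℤ)) : ℂ)) ?_ (bvec N) ?_
  · intro a b hab
    have hab' : ((((4*(N:ℤ)+4) * lam N a + wgt N a : ℤ)) : ℂ)
        = ((((4*(N:ℤ)+4) * lam N b + wgt N b : ℤ)) : ℂ) := hab
    exact key_inj N (by exact_mod_cast hab')
  · intro t
    constructor
    · rw [Module.End.mem_eigenspace_iff]
      exact S_bvec N t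
    · exact bvec_ne N t

lemma sum_aux (n : ℕ) : (∑ l : Fin n, (2*(l:ℕ)+2)) = n*n + n := by
  induction n with
  | zero => simp
  | succ n ih =>
    rw [Fin.sum_univ_castSucc]
    simp only [Fin.coe_castSucc, Fin.val_last]
    rw [ih]
    ring

lemma hcard : Fintype.card (TIdx N) = Module.finrank ℂ ((Fin (N+1) × Fin (N+1)) × Fin 2 → ℂ) := by
  rw [Module.finrank_pi]
  simp only [Fintype.card_sum, Fintype.card_sigma, Fintype.card_fin, Fintype.card_prod]
  rw [sum_aux, sum_aux]
  ring

end assembly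

end FD
namespace FD

lemma prod_Icc_shift (g : ℕ → Polynomial ℂ) (n : ℕ) :
    (∏ ℓ ∈ Finset.Icc 1 n, g ℓ) = ∏ l ∈ Finset.range n, g (l+1) := by
  induction n with
  | zero => simp
  | succ n ih => rw [Finset.prod_Icc_succ_top (by omega), ih, Finset.prod_range_succ]

end FD


theorem fullDirac_charpoly (N : ℕ) (hN : 1 ≤ N) :
    (fullDirac N).charpoly =
      (X - C ((N : ℂ) + 1)) ^ (2 * N + 2) *
        ∏ ℓ ∈ Finset.Icc 1 N, ((X - C (ℓ : ℂ)) ^ (2 * ℓ) * (X + C (ℓ : ℂ)) ^ (2 * ℓ)) := by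
  classical
  haveI : Nonempty (FD.TIdx N) := ⟨Sum.inl ⟨⟨0, Nat.succ_pos N⟩, ⟨0, by omega⟩⟩⟩
  let b : Module.Basis (FD.TIdx N) ℂ ((Fin (N+1) × Fin (N+1)) × Fin 2 → ℂ) :=
    basisOfLinearIndependentOfCardEqFinrank (FD.bvec_li N) (FD.hcard N)
  have hb : ⇑b = FD.bvec N := coe_basisOfLinearIndependentOfCardEqFinrank _ _
  have hdiag : LinearMap.toMatrix b b (Matrix.toLin' (fullDirac N))
      = Matrix.diagonal (fun t => ((FD.lam N t : ℤ) : ℂ)) := by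
    ext i j
    rw [LinearMap.toMatrix_apply]
    have hbj : Matrix.toLin' (fullDirac N) (b j) = ((FD.lam N j : ℤ) : ℂ) • b j := by
      rw [Matrix.toLin'_apply, show (b j : _) = FD.bvec N j from by rw [hb], FD.D_bvec,
        show (FD.bvec N j) = b j from by rw [hb]]
    rw [hbj, _root_.map_smul, Module.Basis.repr_self]
    by_cases hij : i = j
    · subst hij
      simp
    · simp [Matrix.diagonal_apply_ne _ hij, Finsupp.single_apply, Ne.symm hij]
  have hchar : (fullDirac N).charpoly = ∏ t : FD.TIdx N, (X - C ((FD.lam N t : ℤ) : ℂ)) := by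
    have e1 : (fullDirac N).charpoly = (Matrix.toLin' (fullDirac N)).charpoly := by
      conv_lhs => rw [← LinearMap.toMatrix'_toLin' (fullDirac N),
        ← LinearMap.toMatrix_eq_toMatrix']
      rw [LinearMap.charpoly_toMatrix]
    rw [e1, ← LinearMap.charpoly_toMatrix (Matrix.toLin' (fullDirac N)) b, hdiag,
      FD.charpoly_diagonal]
  rw [hchar, Fintype.prod_sum_type]
  have hP1 : (∏ a : (Σ l : Fin (N+1), Fin (2*(l:ℕ)+2)),
      (X - C ((FD.lam N (Sum.inl a) : ℤ) : ℂ)))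
      = ∏ l : Fin (N+1), (X - C (((l:ℕ):ℂ)+1))^(2*(l:ℕ)+2) := by
    rw [← Finset.univ_sigma_univ, Finset.prod_sigma]
    apply Finset.prod_congr rfl
    intro l _
    rw [Finset.prod_congr rfl (g := fun _ => (X - C (((l:ℕ):ℂ)+1))) ?_, Finset.prod_const,
      Finset.card_univ, Fintype.card_fin]
    intro k _
    congr 2
    simp only [FD.lam]
    push_cast
    ring
  have hP2 : (∏ a : (Σ l : Fin N, Fin (2*(l:ℕ)+2)),
      (X - C ((FD.lam N (Sum.inr a) : ℤ) : ℂ)))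
      = ∏ l : Fin N, (X + C (((l:ℕ):ℂ)+1))^(2*(l:ℕ)+2) := by
    rw [← Finset.univ_sigma_univ, Finset.prod_sigma]
    apply Finset.prod_congr rfl
    intro l _
    rw [Finset.prod_congr rfl (g := fun _ => (X + C (((l:ℕ):ℂ)+1))) ?_, Finset.prod_const,
      Finset.card_univ, Fintype.card_fin]
    intro k _
    have hc : ((FD.lam N (Sum.inr ⟨l, k⟩) : ℤ) : ℂ) = -((((l:ℕ):ℂ))+1) := by
      simp only [FD.lam]; push_cast; ring
    rw [hc, map_neg, sub_neg_eq_add]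
  rw [hP1, hP2]
  rw [Fin.prod_univ_castSucc
    (f := fun l : Fin (N+1) => (X - C (((l:ℕ):ℂ)+1))^(2*(l:ℕ)+2))]
  simp only [Fin.coe_castSucc, Fin.val_last]
  rw [Fin.prod_univ_eq_prod_range (fun m => (X - C (((m:ℕ):ℂ)+1))^(2*m+2)) N,
    Fin.prod_univ_eq_prod_range (fun m => (X + C (((m:ℕ):ℂ)+1))^(2*m+2)) N]
  rw [FD.prod_Icc_shift (fun ℓ => (X - C ((ℓ:ℕ):ℂ))^(2*ℓ) * (X + C ((ℓ:ℕ):ℂ))^(2*ℓ)) N]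
  rw [Finset.prod_mul_distrib]
  have e2 : (∏ l ∈ Finset.range N, (X - C (((l+1:ℕ)):ℂ)) ^ (2*(l+1)))
      = ∏ l ∈ Finset.range N, (X - C (((l:ℕ):ℂ)+1)) ^ (2*l+2) := by
    apply Finset.prod_congr rfl
    intro l _
    have hc : (((l+1:ℕ)):ℂ) = ((l:ℕ):ℂ)+1 := by push_cast; ring
    rw [hc, show 2*(l+1) = 2*l+2 from by ring]
  have e3 : (∏ l ∈ Finset.range N, (X + C (((l+1:ℕ)):ℂ)) ^ (2*(l+1)))
      = ∏ l ∈ Finset.range N, (X + C (((l:ℕ):ℂ)+1)) ^ (2*l+2) := by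
    apply Finset.prod_congr rfl
    intro l _
    have hc : (((l+1:ℕ)):ℂ) = ((l:ℕ):ℂ)+1 := by push_cast; ring
    rw [hc, show 2*(l+1) = 2*l+2 from by ring]
  rw [e2, e3]
  ring
end
end

section
/- Let N ≥ 1. For every a ∈ M_(N+1)(ℂ), the following operator-norm inequalities hold: ‖[H, a]‖ ≤ ‖[D_N, a ⊗ 1₂]‖, ‖[E, a]‖ ≤ ‖[D_N, a ⊗ 1₂]‖, and ‖[F, a]‖ ≤ ‖[D_N, a ⊗ 1₂]‖. -/
noncomputable section
open Matrix

/-- `a ⊗ 1₂` in block form. -/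
def tensorOne (N : ℕ) (a : Matrix (Fin (N + 1)) (Fin (N + 1)) ℂ) :
    Matrix (Fin (N + 1) ⊕ Fin (N + 1)) (Fin (N + 1) ⊕ Fin (N + 1)) ℂ :=
  Matrix.fromBlocks a 0 0 a

/-- The operator norm of a square complex matrix, acting on Euclidean space. -/
def opNorm {n : Type*} [Fintype n] [DecidableEq n] (M : Matrix n n ℂ) : ℝ :=
  ‖Matrix.toEuclideanCLM (𝕜 := ℂ) M‖

set_option linter.unusedSectionVars false
section Helpers
variable {n : Type*} [Fintype n] [DecidableEq n]

lemma clm_apply (M : Matrix n n ℂ) (v : EuclideanSpace ℂ n) (i : n) :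
    (Matrix.toEuclideanCLM (𝕜 := ℂ) M v) i = M.mulVec (WithLp.equiv 2 _ v) i := by
  conv_lhs => rw [← (WithLp.equiv 2 (n → ℂ)).symm_apply_apply v]
  rw [WithLp.equiv_symm_apply, Matrix.toEuclideanCLM_toLp]

lemma mulVec_elim_left (M : Matrix (n ⊕ n) (n ⊕ n) ℂ) (x : n → ℂ) (i : n ⊕ n) :
    M.mulVec (Sum.elim x 0) i = Sum.elim (M.toBlocks₁₁.mulVec x) (M.toBlocks₂₁.mulVec x) i := by
  cases i <;>
  simp [Matrix.mulVec, dotProduct, Fintype.sum_sum_type, Matrix.toBlocks₁₁, Matrix.toBlocks₂₁]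

lemma mulVec_elim_right (M : Matrix (n ⊕ n) (n ⊕ n) ℂ) (x : n → ℂ) (i : n ⊕ n) :
    M.mulVec (Sum.elim 0 x) i = Sum.elim (M.toBlocks₁₂.mulVec x) (M.toBlocks₂₂.mulVec x) i := by
  cases i <;>
  simp [Matrix.mulVec, dotProduct, Fintype.sum_sum_type, Matrix.toBlocks₁₂, Matrix.toBlocks₂₂]

lemma opNorm_blocks_le (M : Matrix (n ⊕ n) (n ⊕ n) ℂ) :
    opNorm M.toBlocks₁₁ ≤ opNorm M ∧ opNorm M.toBlocks₁₂ ≤ opNorm M ∧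
    opNorm M.toBlocks₂₁ ≤ opNorm M ∧ opNorm M.toBlocks₂₂ ≤ opNorm M := by
  have keyL : ∀ x : EuclideanSpace ℂ n,
      ‖Matrix.toEuclideanCLM (𝕜 := ℂ) M.toBlocks₁₁ x‖ ≤ opNorm M * ‖x‖ ∧
      ‖Matrix.toEuclideanCLM (𝕜 := ℂ) M.toBlocks₂₁ x‖ ≤ opNorm M * ‖x‖ := by
    intro x
    set y : EuclideanSpace ℂ (n ⊕ n) :=
      (WithLp.equiv 2 _).symm (Sum.elim ((WithLp.equiv 2 _) x) 0) with hy
    have hyx : ‖y‖ = ‖x‖ := by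
      rw [EuclideanSpace.norm_eq, EuclideanSpace.norm_eq, Fintype.sum_sum_type]
      simp [hy]
    have hMy : ∀ i, (Matrix.toEuclideanCLM (𝕜 := ℂ) M y) i =
        Sum.elim (M.toBlocks₁₁.mulVec ((WithLp.equiv 2 _) x))
          (M.toBlocks₂₁.mulVec ((WithLp.equiv 2 _) x)) i := by
      intro i
      rw [clm_apply, hy]; simp only [Equiv.apply_symm_apply]; rw [mulVec_elim_left]

    have hbound : ‖Matrix.toEuclideanCLM (𝕜 := ℂ) M y‖ ≤ opNorm M * ‖x‖ := by
      rw [← hyx]; exact (Matrix.toEuclideanCLM (𝕜 := ℂ) M).le_opNorm y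
    constructor
    · refine le_trans ?_ hbound
      rw [EuclideanSpace.norm_eq, EuclideanSpace.norm_eq, Fintype.sum_sum_type]
      apply Real.sqrt_le_sqrt
      have : ∀ i : n, ‖(Matrix.toEuclideanCLM (𝕜 := ℂ) M.toBlocks₁₁ x) i‖ =
          ‖(Matrix.toEuclideanCLM (𝕜 := ℂ) M y) (Sum.inl i)‖ := by
        intro i; rw [clm_apply, hMy]; rfl
      simp_rw [this]
      exact le_add_of_nonneg_right (by positivity)
    · refine le_trans ?_ hbound
      rw [EuclideanSpace.norm_eq, EuclideanSpace.norm_eq, Fintype.sum_sum_type]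
      apply Real.sqrt_le_sqrt
      have : ∀ i : n, ‖(Matrix.toEuclideanCLM (𝕜 := ℂ) M.toBlocks₂₁ x) i‖ =
          ‖(Matrix.toEuclideanCLM (𝕜 := ℂ) M y) (Sum.inr i)‖ := by
        intro i; rw [clm_apply, hMy]; rfl
      simp_rw [this]
      exact le_add_of_nonneg_left (by positivity)
  have keyR : ∀ x : EuclideanSpace ℂ n,
      ‖Matrix.toEuclideanCLM (𝕜 := ℂ) M.toBlocks₁₂ x‖ ≤ opNorm M * ‖x‖ ∧
      ‖Matrix.toEuclideanCLM (𝕜 := ℂ) M.toBlocks₂₂ x‖ ≤ opNorm M * ‖x‖ := by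
    intro x
    set y : EuclideanSpace ℂ (n ⊕ n) :=
      (WithLp.equiv 2 _).symm (Sum.elim 0 ((WithLp.equiv 2 _) x)) with hy
    have hyx : ‖y‖ = ‖x‖ := by
      rw [EuclideanSpace.norm_eq, EuclideanSpace.norm_eq, Fintype.sum_sum_type]
      simp [hy]
    have hMy : ∀ i, (Matrix.toEuclideanCLM (𝕜 := ℂ) M y) i =
        Sum.elim (M.toBlocks₁₂.mulVec ((WithLp.equiv 2 _) x))
          (M.toBlocks₂₂.mulVec ((WithLp.equiv 2 _) x)) i := by
      intro i
      rw [clm_apply, hy]; simp only [Equiv.apply_symm_apply]; rw [mulVec_elim_right]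

    have hbound : ‖Matrix.toEuclideanCLM (𝕜 := ℂ) M y‖ ≤ opNorm M * ‖x‖ := by
      rw [← hyx]; exact (Matrix.toEuclideanCLM (𝕜 := ℂ) M).le_opNorm y
    constructor
    · refine le_trans ?_ hbound
      rw [EuclideanSpace.norm_eq, EuclideanSpace.norm_eq, Fintype.sum_sum_type]
      apply Real.sqrt_le_sqrt
      have : ∀ i : n, ‖(Matrix.toEuclideanCLM (𝕜 := ℂ) M.toBlocks₁₂ x) i‖ =
          ‖(Matrix.toEuclideanCLM (𝕜 := ℂ) M y) (Sum.inl i)‖ := by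
        intro i; rw [clm_apply, hMy]; rfl
      simp_rw [this]
      exact le_add_of_nonneg_right (by positivity)
    · refine le_trans ?_ hbound
      rw [EuclideanSpace.norm_eq, EuclideanSpace.norm_eq, Fintype.sum_sum_type]
      apply Real.sqrt_le_sqrt
      have : ∀ i : n, ‖(Matrix.toEuclideanCLM (𝕜 := ℂ) M.toBlocks₂₂ x) i‖ =
          ‖(Matrix.toEuclideanCLM (𝕜 := ℂ) M y) (Sum.inr i)‖ := by
        intro i; rw [clm_apply, hMy]; rfl
      simp_rw [this]
      exact le_add_of_nonneg_left (by positivity)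
  refine ⟨?_, ?_, ?_, ?_⟩ <;>
    exact ContinuousLinearMap.opNorm_le_bound _ (norm_nonneg _) fun x =>
      (by first
        | exact (keyL x).1 | exact (keyL x).2 | exact (keyR x).1 | exact (keyR x).2)


end Helpers

theorem comm_norm_le (N : ℕ) (hN : 1 ≤ N) (a : Matrix (Fin (N + 1)) (Fin (N + 1)) ℂ) :
    opNorm (Hmat N * a - a * Hmat N) ≤
      opNorm (DiracOp N * tensorOne N a - tensorOne N a * DiracOp N) ∧
    opNorm (Emat N * a - a * Emat N) ≤
      opNorm (DiracOp N * tensorOne N a - tensorOne N a * DiracOp N) ∧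
    opNorm (Fmat N * a - a * Fmat N) ≤
      opNorm (DiracOp N * tensorOne N a - tensorOne N a * DiracOp N) := by
  have hC : DiracOp N * tensorOne N a - tensorOne N a * DiracOp N =
      Matrix.fromBlocks (Hmat N * a - a * Hmat N) (Fmat N * a - a * Fmat N)
        (Emat N * a - a * Emat N) (a * Hmat N - Hmat N * a) := by
    simp only [DiracOp, tensorOne, Matrix.fromBlocks_multiply]
    rw [sub_eq_add_neg, Matrix.fromBlocks_neg, Matrix.fromBlocks_add]
    congr 1 <;> noncomm_ring
  have h := opNorm_blocks_le (DiracOp N * tensorOne N a - tensorOne N a * DiracOp N)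
  have h11 : (DiracOp N * tensorOne N a - tensorOne N a * DiracOp N).toBlocks₁₁ =
      Hmat N * a - a * Hmat N := by rw [hC]; exact Matrix.toBlocks_fromBlocks₁₁ _ _ _ _
  have h12 : (DiracOp N * tensorOne N a - tensorOne N a * DiracOp N).toBlocks₁₂ =
      Fmat N * a - a * Fmat N := by rw [hC]; exact Matrix.toBlocks_fromBlocks₁₂ _ _ _ _
  have h21 : (DiracOp N * tensorOne N a - tensorOne N a * DiracOp N).toBlocks₂₁ =
      Emat N * a - a * Emat N := by rw [hC]; exact Matrix.toBlocks_fromBlocks₂₁ _ _ _ _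
  rw [h11, h12, h21] at h
  exact ⟨h.1, h.2.2.1, h.2.1⟩
end
end

section
/- Let N ≥ 1. If a ∈ M_(N+1)(ℂ) is hermitian (a = a*) and diagonal in the basis {|m⟩}, then ‖[D_N, a ⊗ 1₂]‖ = ‖[E, a]‖ = ‖[F, a]‖. -/
noncomputable section
open Matrix

section Aux
open scoped Matrix.Norms.L2Operator
variable {n : Type*} [Fintype n] [DecidableEq n]

lemma opNorm_eq_norm (M : Matrix n n ℂ) : opNorm M = ‖M‖ := rfl

lemma opNorm_neg (M : Matrix n n ℂ) : opNorm (-M) = opNorm M := by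
  rw [opNorm_eq_norm, opNorm_eq_norm, norm_neg]

lemma opNorm_conjT (M : Matrix n n ℂ) : opNorm Mᴴ = opNorm M := by
  rw [opNorm_eq_norm, opNorm_eq_norm]; exact Matrix.l2_opNorm_conjTranspose M

lemma euclid_norm_sq {ι : Type*} [Fintype ι] (w : EuclideanSpace ℂ ι) :
    ‖w‖ ^ 2 = ∑ i, ‖w i‖ ^ 2 := by
  rw [EuclideanSpace.norm_eq, Real.sq_sqrt]
  positivity

lemma opNorm_fromBlocks_off (B C : Matrix n n ℂ) (h : opNorm B = opNorm C) :
    opNorm (Matrix.fromBlocks 0 B C 0) = opNorm C := by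
  set X : Matrix (n ⊕ n) (n ⊕ n) ℂ := Matrix.fromBlocks 0 B C 0 with hX
  have hCnn : (0:ℝ) ≤ opNorm C := norm_nonneg _
  refine le_antisymm ?_ ?_
  · refine ContinuousLinearMap.opNorm_le_bound _ hCnn fun v => ?_
    set x : EuclideanSpace ℂ n := WithLp.toLp 2 (fun i => v (Sum.inl i)) with hx
    set y : EuclideanSpace ℂ n := WithLp.toLp 2 (fun i => v (Sum.inr i)) with hy
    have hvsq : ‖v‖ ^ 2 = ‖x‖ ^ 2 + ‖y‖ ^ 2 := by
      rw [euclid_norm_sq, euclid_norm_sq, euclid_norm_sq, Fintype.sum_sum_type]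
    have hTl : ∀ i, (Matrix.toEuclideanCLM (𝕜 := ℂ) X v) (Sum.inl i)
        = (Matrix.toEuclideanCLM (𝕜 := ℂ) B y) i := by
      intro i
      show (X *ᵥ (fun j => v j)) (Sum.inl i) = (B *ᵥ (fun j => y j)) i
      simp [hX, Matrix.mulVec, dotProduct, Fintype.sum_sum_type, hy]
    have hTr : ∀ i, (Matrix.toEuclideanCLM (𝕜 := ℂ) X v) (Sum.inr i)
        = (Matrix.toEuclideanCLM (𝕜 := ℂ) C x) i := by
      intro i
      show (X *ᵥ (fun j => v j)) (Sum.inr i) = (C *ᵥ (fun j => x j)) i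
      simp [hX, Matrix.mulVec, dotProduct, Fintype.sum_sum_type, hx]
    have hTsq : ‖Matrix.toEuclideanCLM (𝕜 := ℂ) X v‖ ^ 2
        = ‖Matrix.toEuclideanCLM (𝕜 := ℂ) B y‖ ^ 2 + ‖Matrix.toEuclideanCLM (𝕜 := ℂ) C x‖ ^ 2 := by
      rw [euclid_norm_sq, euclid_norm_sq, euclid_norm_sq, Fintype.sum_sum_type]
      simp only [hTl, hTr]
    have hb : ‖Matrix.toEuclideanCLM (𝕜 := ℂ) B y‖ ≤ opNorm C * ‖y‖ := by
      rw [← h]; exact (Matrix.toEuclideanCLM (𝕜 := ℂ) B).le_opNorm y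
    have hc : ‖Matrix.toEuclideanCLM (𝕜 := ℂ) C x‖ ≤ opNorm C * ‖x‖ := by
      exact (Matrix.toEuclideanCLM (𝕜 := ℂ) C).le_opNorm x
    have hsq : ‖Matrix.toEuclideanCLM (𝕜 := ℂ) X v‖ ^ 2 ≤ (opNorm C * ‖v‖) ^ 2 := by
      rw [hTsq, mul_pow, hvsq]
      have h1 : ‖Matrix.toEuclideanCLM (𝕜 := ℂ) B y‖ ^ 2 ≤ (opNorm C) ^2 * ‖y‖ ^ 2 := by
        calc _ ≤ (opNorm C * ‖y‖)^2 := by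
                  apply pow_le_pow_left₀ (norm_nonneg _) hb
             _ = _ := by ring
      have h2 : ‖Matrix.toEuclideanCLM (𝕜 := ℂ) C x‖ ^ 2 ≤ (opNorm C) ^2 * ‖x‖ ^ 2 := by
        calc _ ≤ (opNorm C * ‖x‖)^2 := by
                  apply pow_le_pow_left₀ (norm_nonneg _) hc
             _ = _ := by ring
      nlinarith
    have := Real.sqrt_le_sqrt hsq
    rwa [Real.sqrt_sq (norm_nonneg _), Real.sqrt_sq (by positivity)] at this
  · refine ContinuousLinearMap.opNorm_le_bound _ (norm_nonneg _) fun u => ?_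
    set v : EuclideanSpace ℂ (n ⊕ n) := WithLp.toLp 2 (Sum.elim (fun i => u i) 0) with hv
    have hveq : ‖v‖ = ‖u‖ := by
      have h1 : ‖v‖ ^ 2 = ‖u‖ ^ 2 := by
        rw [euclid_norm_sq, euclid_norm_sq, Fintype.sum_sum_type]
        simp [hv]
      have := congrArg Real.sqrt h1
      rwa [Real.sqrt_sq (norm_nonneg _), Real.sqrt_sq (norm_nonneg _)] at this
    have hTeq : ‖Matrix.toEuclideanCLM (𝕜 := ℂ) X v‖ = ‖Matrix.toEuclideanCLM (𝕜 := ℂ) C u‖ := by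
      have h1 : ‖Matrix.toEuclideanCLM (𝕜 := ℂ) X v‖ ^ 2
          = ‖Matrix.toEuclideanCLM (𝕜 := ℂ) C u‖ ^ 2 := by
        rw [euclid_norm_sq, euclid_norm_sq, Fintype.sum_sum_type]
        have hTl : ∀ i, (Matrix.toEuclideanCLM (𝕜 := ℂ) X v) (Sum.inl i) = 0 := by
          intro i
          show (X *ᵥ (fun j => v j)) (Sum.inl i) = 0
          simp [hX, hv, Matrix.mulVec, dotProduct, Fintype.sum_sum_type]
        have hTr : ∀ i, (Matrix.toEuclideanCLM (𝕜 := ℂ) X v) (Sum.inr i)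
            = (Matrix.toEuclideanCLM (𝕜 := ℂ) C u) i := by
          intro i
          show (X *ᵥ (fun j => v j)) (Sum.inr i) = (C *ᵥ (fun j => u j)) i
          simp [hX, hv, Matrix.mulVec, dotProduct, Fintype.sum_sum_type]
        simp [hTl, hTr]
      have := congrArg Real.sqrt h1
      rwa [Real.sqrt_sq (norm_nonneg _), Real.sqrt_sq (norm_nonneg _)] at this
    calc ‖Matrix.toEuclideanCLM (𝕜 := ℂ) C u‖ = ‖Matrix.toEuclideanCLM (𝕜 := ℂ) X v‖ := hTeq.symm
      _ ≤ ‖Matrix.toEuclideanCLM (𝕜 := ℂ) X‖ * ‖v‖ := (Matrix.toEuclideanCLM (𝕜 := ℂ) X).le_opNorm v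
      _ = opNorm X * ‖u‖ := by rw [hveq]; rfl

end Aux

theorem comm_norm_diag (N : ℕ) (hN : 1 ≤ N) (a : Matrix (Fin (N + 1)) (Fin (N + 1)) ℂ)
    (ha : a.IsHermitian) (hdiag : a.IsDiag) :
    opNorm (DiracOp N * tensorOne N a - tensorOne N a * DiracOp N) =
      opNorm (Emat N * a - a * Emat N) ∧
    opNorm (DiracOp N * tensorOne N a - tensorOne N a * DiracOp N) =
      opNorm (Fmat N * a - a * Fmat N) := by
  have hHa : Hmat N * a = a * Hmat N := by
    rw [← hdiag.diagonal_diag, Hmat, diagonal_mul_diagonal, diagonal_mul_diagonal]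
    exact congrArg Matrix.diagonal (funext fun i => mul_comm _ _)
  have hcomm : DiracOp N * tensorOne N a - tensorOne N a * DiracOp N
      = Matrix.fromBlocks 0 (Fmat N * a - a * Fmat N) (Emat N * a - a * Emat N) 0 := by
    rw [DiracOp, tensorOne, Matrix.fromBlocks_multiply, Matrix.fromBlocks_multiply]
    have h1 : (1 + Hmat N) * a + Fmat N * 0 - (a * (1 + Hmat N) + 0 * Emat N) = 0 := by
      simp [add_mul, mul_add, hHa]
    have h2 : (1 + Hmat N) * 0 + Fmat N * a - (a * Fmat N + 0 * (1 - Hmat N)) = Fmat N * a - a * Fmat N := by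
      simp
    have h3 : Emat N * a + (1 - Hmat N) * 0 - (0 * (1 + Hmat N) + a * Emat N) = Emat N * a - a * Emat N := by
      simp
    have h4 : Emat N * 0 + (1 - Hmat N) * a - (0 * Fmat N + a * (1 - Hmat N)) = 0 := by
      simp [sub_mul, mul_sub, hHa]
    ext (i|i) (j|j) <;>
      simp only [Matrix.sub_apply, Matrix.fromBlocks_apply₁₁, Matrix.fromBlocks_apply₁₂,
        Matrix.fromBlocks_apply₂₁, Matrix.fromBlocks_apply₂₂] <;>
      [exact congrFun (congrFun h1 i) j; exact congrFun (congrFun h2 i) j;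
       exact congrFun (congrFun h3 i) j; exact congrFun (congrFun h4 i) j]
  have hBC : Fmat N * a - a * Fmat N = -((Emat N * a - a * Emat N)ᴴ) := by
    rw [Fmat]
    simp [Matrix.conjTranspose_sub, Matrix.conjTranspose_mul, ha.eq]
  have hnorm : opNorm (Fmat N * a - a * Fmat N) = opNorm (Emat N * a - a * Emat N) := by
    rw [hBC, opNorm_neg, opNorm_conjT]
  refine ⟨?_, ?_⟩
  · rw [hcomm]; exact opNorm_fromBlocks_off _ _ hnorm
  · rw [hcomm, opNorm_fromBlocks_off _ _ hnorm, hnorm]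
end
end

section
/- Let a ∈ M₂(ℂ) be hermitian, written a = a₀·1₂ + a₁σ₁ + a₂σ₂ + a₃σ₃ with a₀, a₁, a₂, a₃ ∈ ℝ. Then the operator norm of the commutator with the N = 1 Dirac operator is ‖[D₁, a ⊗ 1₂]‖ = 2√(a₁² + a₂² + a₃²). -/
noncomputable section
open Matrix

/-- The explicit commutator matrix `[D₁, a ⊗ 1₂]`. -/
def Cmat (a₁ a₂ a₃ : ℝ) : Matrix (Fin 2 ⊕ Fin 2) (Fin 2 ⊕ Fin 2) ℂ :=
  Matrix.fromBlocks
    !![0, -((a₁:ℂ) - (a₂:ℂ)*Complex.I); (a₁:ℂ) + (a₂:ℂ)*Complex.I, 0]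
    !![(a₁:ℂ) + (a₂:ℂ)*Complex.I, -2*(a₃:ℂ); 0, -((a₁:ℂ) + (a₂:ℂ)*Complex.I)]
    !![-((a₁:ℂ) - (a₂:ℂ)*Complex.I), 0; 2*(a₃:ℂ), (a₁:ℂ) - (a₂:ℂ)*Complex.I]
    !![0, (a₁:ℂ) - (a₂:ℂ)*Complex.I; -((a₁:ℂ) + (a₂:ℂ)*Complex.I), 0]

lemma comm_eq (a₀ a₁ a₂ a₃ : ℝ) :
    DiracOp 1 * tensorOne 1 ((a₀ : ℂ) • 1 + (a₁ : ℂ) • pauli 0 +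
          (a₂ : ℂ) • pauli 1 + (a₃ : ℂ) • pauli 2) -
        tensorOne 1 ((a₀ : ℂ) • 1 + (a₁ : ℂ) • pauli 0 +
          (a₂ : ℂ) • pauli 1 + (a₃ : ℂ) • pauli 2) * DiracOp 1 = Cmat a₁ a₂ a₃ := by
  ext i j
  rcases i with i | i <;> rcases j with j | j <;> fin_cases i <;> fin_cases j <;>
    simp [DiracOp, tensorOne, Cmat, pauli, Hmat, Emat, Fmat, Matrix.mul_apply,
      Fintype.sum_sum_type, Fin.sum_univ_two, Matrix.conjTranspose_apply,
      Matrix.one_apply, Matrix.diagonal] <;>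
    norm_num <;> ring

set_option maxHeartbeats 2000000 in
lemma key_s8 (a₁ a₂ a₃ : ℝ) :
    ((Cmat a₁ a₂ a₃)ᴴ * Cmat a₁ a₂ a₃) * ((Cmat a₁ a₂ a₃)ᴴ * Cmat a₁ a₂ a₃) =
      ((4*(a₁^2+a₂^2+a₃^2) : ℝ) : ℂ) • ((Cmat a₁ a₂ a₃)ᴴ * Cmat a₁ a₂ a₃) := by
  ext i j
  rcases i with i | i <;> rcases j with j | j <;> fin_cases i <;> fin_cases j <;>
    simp [Cmat, Matrix.mul_apply, Fintype.sum_sum_type, Fin.sum_univ_two,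
      Matrix.conjTranspose_apply, Complex.ext_iff] <;>
    simp [← Complex.ofReal_pow] <;> ring_nf <;> simp

lemma Cmat_ne_zero {a₁ a₂ a₃ : ℝ} (h : ¬ (a₁ = 0 ∧ a₂ = 0 ∧ a₃ = 0)) :
    Cmat a₁ a₂ a₃ ≠ 0 := by
  intro h0
  apply h
  have e1 := congrFun (congrFun h0 (Sum.inl 1)) (Sum.inl 0)
  have e2 := congrFun (congrFun h0 (Sum.inr 1)) (Sum.inl 0)
  simp [Cmat, Complex.ext_iff] at e1 e2
  exact ⟨e1.1, e1.2, e2⟩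

set_option synthInstance.maxHeartbeats 400000 in
set_option maxHeartbeats 1000000 in
lemma norm_Cmat (a₁ a₂ a₃ : ℝ) :
    opNorm (Cmat a₁ a₂ a₃) = 2 * Real.sqrt (a₁ ^ 2 + a₂ ^ 2 + a₃ ^ 2) := by
  by_cases h : a₁ = 0 ∧ a₂ = 0 ∧ a₃ = 0
  · obtain ⟨h1, h2, h3⟩ := h
    subst h1; subst h2; subst h3
    have hz : Cmat 0 0 0 = 0 := by
      ext i j
      rcases i with i | i <;> rcases j with j | j <;> fin_cases i <;> fin_cases j <;>
        simp [Cmat]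
    simp [opNorm, hz]
  · have hr2pos : 0 < a₁ ^ 2 + a₂ ^ 2 + a₃ ^ 2 := by
      rcases not_and_or.mp h with h1 | h23
      · have : 0 < a₁ ^ 2 := by positivity
        nlinarith [sq_nonneg a₂, sq_nonneg a₃]
      rcases not_and_or.mp h23 with h2 | h3
      · have : 0 < a₂ ^ 2 := by positivity
        nlinarith [sq_nonneg a₁, sq_nonneg a₃]
      · have : 0 < a₃ ^ 2 := by positivity
        nlinarith [sq_nonneg a₁, sq_nonneg a₂]
    set T := Matrix.toEuclideanCLM (𝕜 := ℂ) (Cmat a₁ a₂ a₃) with hT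
    have hTne : T ≠ 0 := by
      intro h0
      have hinj := (Matrix.toEuclideanCLM (𝕜 := ℂ) (n := Fin 2 ⊕ Fin 2)).injective
      have hz : Matrix.toEuclideanCLM (𝕜 := ℂ) (Cmat a₁ a₂ a₃) =
          Matrix.toEuclideanCLM (𝕜 := ℂ) (0 : Matrix (Fin 2 ⊕ Fin 2) (Fin 2 ⊕ Fin 2) ℂ) := by
        rw [map_zero, ← hT]; exact h0
      exact Cmat_ne_zero h (hinj hz)
    set S := star T * T with hSdef
    have hS : S * S = ((4 * (a₁ ^ 2 + a₂ ^ 2 + a₃ ^ 2) : ℝ) : ℂ) • S := by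
      have h2 := congrArg (Matrix.toEuclideanCLM (𝕜 := ℂ)) (key_s8 a₁ a₂ a₃)
      simp only [← Matrix.star_eq_conjTranspose, _root_.map_mul, _root_.map_smul,
        map_star] at h2
      exact h2
    have hSsa : star S = S := by
      rw [hSdef, StarMul.star_mul, star_star]
    have hnormS : ‖S‖ = ‖T‖ * ‖T‖ := CStarRing.norm_star_mul_self (x := T)
    have hSne : ‖S‖ ≠ 0 := by
      have hTn : ‖T‖ ≠ 0 := norm_ne_zero_iff.mpr hTne
      rw [hnormS]; positivity
    have h1 : ‖S‖ * ‖S‖ = (4 * (a₁ ^ 2 + a₂ ^ 2 + a₃ ^ 2)) * ‖S‖ := by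
      calc ‖S‖ * ‖S‖ = ‖star S * S‖ := (CStarRing.norm_star_mul_self (x := S)).symm
        _ = ‖S * S‖ := by rw [hSsa]
        _ = ‖((4 * (a₁ ^ 2 + a₂ ^ 2 + a₃ ^ 2) : ℝ) : ℂ) • S‖ := by rw [hS]
        _ = ‖((4 * (a₁ ^ 2 + a₂ ^ 2 + a₃ ^ 2) : ℝ) : ℂ)‖ * ‖S‖ := by
            exact norm_smul (((4 * (a₁ ^ 2 + a₂ ^ 2 + a₃ ^ 2) : ℝ) : ℂ)) S
        _ = (4 * (a₁ ^ 2 + a₂ ^ 2 + a₃ ^ 2)) * ‖S‖ := by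
            rw [Complex.norm_real, Real.norm_eq_abs, abs_of_pos (by linarith)]
    have hSval : ‖S‖ = 4 * (a₁ ^ 2 + a₂ ^ 2 + a₃ ^ 2) :=
      mul_right_cancel₀ hSne h1
    have hTsq : ‖T‖ * ‖T‖ = 4 * (a₁ ^ 2 + a₂ ^ 2 + a₃ ^ 2) := by rw [← hnormS, hSval]
    have hgoal : opNorm (Cmat a₁ a₂ a₃) = ‖T‖ := rfl
    rw [hgoal]
    nlinarith [norm_nonneg T, Real.sq_sqrt (le_of_lt hr2pos),
      Real.sqrt_nonneg (a₁ ^ 2 + a₂ ^ 2 + a₃ ^ 2),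
      sq_nonneg (‖T‖ - 2 * Real.sqrt (a₁ ^ 2 + a₂ ^ 2 + a₃ ^ 2))]

theorem comm_norm_N_eq_one (a₀ a₁ a₂ a₃ : ℝ) :
    opNorm (DiracOp 1 * tensorOne 1 ((a₀ : ℂ) • 1 + (a₁ : ℂ) • pauli 0 +
          (a₂ : ℂ) • pauli 1 + (a₃ : ℂ) • pauli 2) -
        tensorOne 1 ((a₀ : ℂ) • 1 + (a₁ : ℂ) • pauli 0 +
          (a₂ : ℂ) • pauli 1 + (a₃ : ℂ) • pauli 2) * DiracOp 1) =
      2 * Real.sqrt (a₁ ^ 2 + a₂ ^ 2 + a₃ ^ 2) := by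
  rw [comm_eq]
  exact norm_Cmat a₁ a₂ a₃
end
end

section
/- For N = 1: for every x, y in the closed unit ball B³ ⊂ ℝ³, letting ω_x denote the state on M₂(ℂ) given by ω_x(a₀·1₂ + a₁σ₁ + a₂σ₂ + a₃σ₃) := a₀ + x₁a₁ + x₂a₂ + x₃a₃ (for a₀, aᵢ ∈ ℝ, extended complex-linearly), the spectral distance satisfies d₁(ω_x, ω_y) = ½ |x − y|, where |x − y| is the Euclidean distance in ℝ³. -/
noncomputable section
open Matrix

/-- The spectral distance between two states (functionals) on `M_(N+1)(ℂ)`: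
`d_N(ω, ω') = sup { |ω(a) − ω'(a)| : a = a*, ‖[D_N, a ⊗ 1₂]‖ ≤ 1 }`. -/
def specDist (N : ℕ) (ω ω' : Matrix (Fin (N + 1)) (Fin (N + 1)) ℂ → ℂ) : ℝ :=
  sSup {r : ℝ | ∃ a : Matrix (Fin (N + 1)) (Fin (N + 1)) ℂ, a.IsHermitian ∧
    opNorm (DiracOp N * tensorOne N a - tensorOne N a * DiracOp N) ≤ 1 ∧
    r = ‖ω a - ω' a‖}

/-- The state `ω_x` on `M₂(ℂ)` attached to a point `x` of the closed unit ball of `ℝ³`: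
`ω_x(a₀·1 + Σ aₖ σₖ) = a₀ + Σ xₖ aₖ`, i.e. `ω_x(a) = Tr(a)/2 + Σₖ xₖ · Tr(σₖ a)/2`. -/
def omegaState (x : EuclideanSpace ℝ (Fin 3)) : Matrix (Fin 2) (Fin 2) ℂ → ℂ := fun a =>
  a.trace / 2 + ∑ k : Fin 3, (x k : ℂ) * (pauli k * a).trace / 2

/-! ### Auxiliary development -/

open scoped Matrix.Norms.L2Operator

/-- The traceless hermitian matrix with Pauli coordinates `t`. -/
def vmat (t : Fin 3 → ℝ) : Matrix (Fin 2) (Fin 2) ℂ :=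
  !![(t 2 : ℂ), (t 0 : ℂ) - (t 1 : ℂ) * Complex.I;
     (t 0 : ℂ) + (t 1 : ℂ) * Complex.I, -(t 2 : ℂ)]

/-- The commutator `[D₁, vmat t ⊗ 1]`, explicitly. -/
def cmat (t : Fin 3 → ℝ) : Matrix (Fin 2 ⊕ Fin 2) (Fin 2 ⊕ Fin 2) ℂ :=
  Matrix.fromBlocks
    !![0, -((t 0 : ℂ) - (t 1 : ℂ) * Complex.I); (t 0 : ℂ) + (t 1 : ℂ) * Complex.I, 0]
    !![(t 0 : ℂ) + (t 1 : ℂ) * Complex.I, -2 * (t 2 : ℂ); 0, -((t 0 : ℂ) + (t 1 : ℂ) * Complex.I)]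
    !![-((t 0 : ℂ) - (t 1 : ℂ) * Complex.I), 0; 2 * (t 2 : ℂ), (t 0 : ℂ) - (t 1 : ℂ) * Complex.I]
    !![0, (t 0 : ℂ) - (t 1 : ℂ) * Complex.I; -((t 0 : ℂ) + (t 1 : ℂ) * Complex.I), 0]

lemma opNorm_eq (M : Matrix (Fin 2 ⊕ Fin 2) (Fin 2 ⊕ Fin 2) ℂ) : opNorm M = ‖M‖ :=
  (Matrix.cstar_norm_def M).symm

lemma vmat_herm (t : Fin 3 → ℝ) : (vmat t).IsHermitian := by
  show _ᴴ = _
  ext i j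
  fin_cases i <;> fin_cases j <;>
    simp [vmat, Matrix.conjTranspose_apply, Complex.ext_iff]

lemma comm_vmat (t : Fin 3 → ℝ) :
    DiracOp 1 * tensorOne 1 (vmat t) - tensorOne 1 (vmat t) * DiracOp 1 = cmat t := by
  ext i j
  rcases i with i | i <;> rcases j with j | j <;> fin_cases i <;> fin_cases j <;>
    simp [DiracOp, tensorOne, cmat, vmat, Hmat, Emat, Fmat, Matrix.mul_apply,
      Fintype.sum_sum_type, Fin.sum_univ_succ, Matrix.fromBlocks, Matrix.one_apply,
      Matrix.diagonal] <;> ring_nf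

set_option maxHeartbeats 4000000 in
lemma key_s9 (t : Fin 3 → ℝ) :
    ((cmat t)ᴴ * cmat t) * ((cmat t)ᴴ * cmat t)
      = ((4 * (t 0 ^ 2 + t 1 ^ 2 + t 2 ^ 2) : ℝ) : ℂ) • ((cmat t)ᴴ * cmat t) := by
  ext i j
  rcases i with i | i <;> rcases j with j | j <;> fin_cases i <;> fin_cases j <;>
    · simp [cmat, Matrix.mul_apply, Fintype.sum_sum_type, Fin.sum_univ_succ,
        Matrix.conjTranspose_apply, Complex.ext_iff, ← Complex.ofReal_pow]
      constructor <;> ring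

set_option maxHeartbeats 1000000 in
lemma keydiag (t : Fin 3 → ℝ) :
    ((cmat t)ᴴ * cmat t) (Sum.inl 0) (Sum.inl 0) + ((cmat t)ᴴ * cmat t) (Sum.inl 1) (Sum.inl 1)
      = ((4 * (t 0 ^ 2 + t 1 ^ 2 + t 2 ^ 2) : ℝ) : ℂ) := by
  simp [cmat, Matrix.mul_apply, Fintype.sum_sum_type, Fin.sum_univ_succ,
    Matrix.conjTranspose_apply, Complex.ext_iff, ← Complex.ofReal_pow]
  constructor <;> ring

/-- The operator norm of the commutator. -/
lemma opNorm_cmat (t : Fin 3 → ℝ) :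
    opNorm (cmat t) = 2 * Real.sqrt (t 0 ^ 2 + t 1 ^ 2 + t 2 ^ 2) := by
  rw [opNorm_eq]
  set c : ℝ := 4 * (t 0 ^ 2 + t 1 ^ 2 + t 2 ^ 2) with hc
  have hc0 : 0 ≤ c := by positivity
  set S := (cmat t)ᴴ * cmat t with hS
  have h1 : ‖S‖ = ‖cmat t‖ * ‖cmat t‖ := Matrix.l2_opNorm_conjTranspose_mul_self _
  have hSh : Sᴴ = S := by
    rw [hS, Matrix.conjTranspose_mul, Matrix.conjTranspose_conjTranspose]
  have h2 : ‖S‖ * ‖S‖ = c * ‖S‖ := by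
    calc ‖S‖ * ‖S‖ = ‖Sᴴ * S‖ := (Matrix.l2_opNorm_conjTranspose_mul_self S).symm
    _ = ‖(c : ℂ) • S‖ := by rw [hSh, key_s9 t]
    _ = ‖(c : ℂ)‖ * ‖S‖ := norm_smul _ _
    _ = c * ‖S‖ := by rw [Complex.norm_real, Real.norm_eq_abs, abs_of_nonneg hc0]
  have hgoal : ‖cmat t‖ * ‖cmat t‖ = c := by
    rcases eq_or_ne ‖S‖ 0 with h0 | h0
    · have hS0 : S = 0 := norm_eq_zero.mp h0
      have : ((c : ℝ) : ℂ) = 0 := by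
        rw [hc, ← keydiag t, show (cmat t)ᴴ * cmat t = S from hS.symm, hS0]; simp
      have hc' : c = 0 := by exact_mod_cast this
      rw [← h1, h0, hc']
    · rw [← h1, mul_right_cancel₀ h0 h2]
  have h3 : ‖cmat t‖ = Real.sqrt c := by
    rw [← hgoal, Real.sqrt_mul_self (norm_nonneg _)]
  rw [h3, hc]
  rw [show (4 : ℝ) * (t 0 ^ 2 + t 1 ^ 2 + t 2 ^ 2) = 2 ^ 2 * (t 0 ^ 2 + t 1 ^ 2 + t 2 ^ 2) by ring,
    Real.sqrt_mul (by positivity), Real.sqrt_sq (by norm_num)]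

/-- Decomposition of a hermitian 2×2 matrix. -/
lemma herm_decomp (a : Matrix (Fin 2) (Fin 2) ℂ) (ha : a.IsHermitian) :
    ∃ (c : ℝ) (t : Fin 3 → ℝ), a = (c : ℂ) • 1 + vmat t := by
  have h00 : a 0 0 = (starRingEnd ℂ) (a 0 0) := by
    conv_lhs => rw [← ha]
    simp [Matrix.conjTranspose_apply]
  have h11 : a 1 1 = (starRingEnd ℂ) (a 1 1) := by
    conv_lhs => rw [← ha]
    simp [Matrix.conjTranspose_apply]
  have h10 : a 1 0 = (starRingEnd ℂ) (a 0 1) := by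
    conv_lhs => rw [← ha]
    simp [Matrix.conjTranspose_apply]
  have him00 : (a 0 0).im = 0 := by
    have := congrArg Complex.im h00; simpa using by linarith [this, Complex.conj_im (a 0 0)]
  have him11 : (a 1 1).im = 0 := by
    have := congrArg Complex.im h11; simpa using by linarith [this, Complex.conj_im (a 1 1)]
  refine ⟨((a 0 0).re + (a 1 1).re) / 2,
    ![(a 0 1).re, -(a 0 1).im, ((a 0 0).re - (a 1 1).re) / 2], ?_⟩
  ext i j
  fin_cases i <;> fin_cases j <;>
    simp [vmat, Matrix.one_apply, Complex.ext_iff, him00, him11, h10, Complex.ext_iff] <;>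
    ring_nf <;> simp [him00, him11] <;> ring

/-- Evaluation of the states on the decomposition. -/
lemma omega_eval (x : EuclideanSpace ℝ (Fin 3)) (c : ℝ) (t : Fin 3 → ℝ) :
    omegaState x ((c : ℂ) • 1 + vmat t)
      = ((c + (x 0 * t 0 + x 1 * t 1 + x 2 * t 2) : ℝ) : ℂ) := by
  simp [omegaState, pauli, vmat, Matrix.trace_fin_two, Fin.sum_univ_three, Matrix.mul_apply,
    Fin.sum_univ_succ, Matrix.one_apply, Complex.ext_iff]
  ring

lemma tensorOne_decomp (c : ℝ) (v : Matrix (Fin 2) (Fin 2) ℂ) :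
    tensorOne 1 ((c : ℂ) • 1 + v) = (c : ℂ) • 1 + tensorOne 1 v := by
  ext i j
  rcases i with i | i <;> rcases j with j | j <;>
    simp [tensorOne, Matrix.fromBlocks, Matrix.one_apply]

lemma comm_decomp (c : ℝ) (t : Fin 3 → ℝ) :
    DiracOp 1 * tensorOne 1 ((c : ℂ) • 1 + vmat t)
      - tensorOne 1 ((c : ℂ) • 1 + vmat t) * DiracOp 1 = cmat t := by
  rw [tensorOne_decomp, ← comm_vmat t]
  simp only [mul_add, add_mul, Matrix.mul_smul, Matrix.smul_mul, mul_one, one_mul]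
  abel

/-- Cauchy–Schwarz in three real variables. -/
lemma cs3 (u t : Fin 3 → ℝ) :
    |u 0 * t 0 + u 1 * t 1 + u 2 * t 2|
      ≤ Real.sqrt (u 0 ^ 2 + u 1 ^ 2 + u 2 ^ 2) * Real.sqrt (t 0 ^ 2 + t 1 ^ 2 + t 2 ^ 2) := by
  have h : (u 0 * t 0 + u 1 * t 1 + u 2 * t 2) ^ 2
      ≤ (u 0 ^ 2 + u 1 ^ 2 + u 2 ^ 2) * (t 0 ^ 2 + t 1 ^ 2 + t 2 ^ 2) := by
    nlinarith [sq_nonneg (u 0 * t 1 - u 1 * t 0), sq_nonneg (u 0 * t 2 - u 2 * t 0),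
      sq_nonneg (u 1 * t 2 - u 2 * t 1)]
  calc |u 0 * t 0 + u 1 * t 1 + u 2 * t 2|
      = Real.sqrt ((u 0 * t 0 + u 1 * t 1 + u 2 * t 2) ^ 2) := (Real.sqrt_sq_eq_abs _).symm
    _ ≤ Real.sqrt ((u 0 ^ 2 + u 1 ^ 2 + u 2 ^ 2) * (t 0 ^ 2 + t 1 ^ 2 + t 2 ^ 2)) :=
        Real.sqrt_le_sqrt h
    _ = _ := Real.sqrt_mul (by positivity) _

lemma norm_sub_eq (x y : EuclideanSpace ℝ (Fin 3)) :
    ‖x - y‖ = Real.sqrt ((x 0 - y 0) ^ 2 + (x 1 - y 1) ^ 2 + (x 2 - y 2) ^ 2) := by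
  rw [EuclideanSpace.norm_eq]
  congr 1
  simp [Fin.sum_univ_three, sq_abs]

set_option maxHeartbeats 2000000 in
theorem specDist_ball (x y : EuclideanSpace ℝ (Fin 3)) (hx : ‖x‖ ≤ 1) (hy : ‖y‖ ≤ 1) :
    specDist 1 (omegaState x) (omegaState y) = ‖x - y‖ / 2 := by
  unfold specDist
  set S : Set ℝ := {r : ℝ | ∃ a : Matrix (Fin (1+1)) (Fin (1+1)) ℂ, a.IsHermitian ∧
    opNorm (DiracOp 1 * tensorOne 1 a - tensorOne 1 a * DiracOp 1) ≤ 1 ∧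
    r = ‖omegaState x a - omegaState y a‖} with hSdef
  have hmem0 : (0 : ℝ) ∈ S := by
    refine ⟨(0 : Matrix (Fin 2) (Fin 2) ℂ), Matrix.isHermitian_zero, ?_, by simp [omegaState]⟩
    have : tensorOne 1 (0 : Matrix (Fin 2) (Fin 2) ℂ) = 0 := by
      ext i j; rcases i with i | i <;> rcases j with j | j <;> simp [tensorOne]
    rw [this]
    simp [opNorm_eq]
  have hub : ∀ r ∈ S, r ≤ ‖x - y‖ / 2 := by
    rintro r ⟨a, ha, hn, hr⟩
    obtain ⟨c, t, rfl⟩ := herm_decomp a ha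
    rw [comm_decomp, opNorm_cmat] at hn
    have hst : Real.sqrt (t 0 ^ 2 + t 1 ^ 2 + t 2 ^ 2) ≤ 1 / 2 := by linarith
    have hval : omegaState x ((c:ℂ) • 1 + vmat t) - omegaState y ((c:ℂ) • 1 + vmat t) =
      (((x 0 - y 0) * t 0 + (x 1 - y 1) * t 1 + (x 2 - y 2) * t 2 : ℝ) : ℂ) := by
      rw [omega_eval, omega_eval]; push_cast; ring
    rw [hval, Complex.norm_real, Real.norm_eq_abs] at hr
    rw [hr]
    calc |(x 0 - y 0) * t 0 + (x 1 - y 1) * t 1 + (x 2 - y 2) * t 2|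
        ≤ Real.sqrt ((x 0 - y 0) ^ 2 + (x 1 - y 1) ^ 2 + (x 2 - y 2) ^ 2) *
          Real.sqrt (t 0 ^ 2 + t 1 ^ 2 + t 2 ^ 2) := cs3 (fun k => x k - y k) t
      _ = ‖x - y‖ * Real.sqrt (t 0 ^ 2 + t 1 ^ 2 + t 2 ^ 2) := by rw [norm_sub_eq]
      _ ≤ ‖x - y‖ * (1 / 2) :=
          mul_le_mul_of_nonneg_left hst (norm_nonneg _)
      _ = ‖x - y‖ / 2 := by ring
  have hbdd : BddAbove S := ⟨‖x - y‖ / 2, fun r hr => hub r hr⟩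
  refine le_antisymm (csSup_le ⟨0, hmem0⟩ hub) ?_
  by_cases hxy : x = y
  · subst hxy
    simp only [sub_self, norm_zero, zero_div]
    exact le_csSup hbdd hmem0
  · set n := ‖x - y‖ with hndef
    have hn : 0 < n := norm_pos_iff.mpr (sub_ne_zero.mpr hxy)
    set t : Fin 3 → ℝ := fun k => (x k - y k) / (2 * n) with ht
    have hsum : (x 0 - y 0) ^ 2 + (x 1 - y 1) ^ 2 + (x 2 - y 2) ^ 2 = n ^ 2 := by
      rw [hndef, norm_sub_eq, Real.sq_sqrt (by positivity)]
    have htsum : t 0 ^ 2 + t 1 ^ 2 + t 2 ^ 2 = 1 / 4 := by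
      have h : t 0 ^ 2 + t 1 ^ 2 + t 2 ^ 2
          = ((x 0 - y 0) ^ 2 + (x 1 - y 1) ^ 2 + (x 2 - y 2) ^ 2) / (4 * n ^ 2) := by
        simp only [ht]; ring
      rw [h, hsum]
      field_simp
    have hd : omegaState x (vmat t) - omegaState y (vmat t) = ((n / 2 : ℝ) : ℂ) := by
      rw [show vmat t = ((0 : ℝ) : ℂ) • 1 + vmat t by simp, omega_eval, omega_eval]
      have h : (0 : ℝ) + (x 0 * t 0 + x 1 * t 1 + x 2 * t 2)
          - ((0 : ℝ) + (y 0 * t 0 + y 1 * t 1 + y 2 * t 2)) = n / 2 := by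
        have h2 : (x 0 - y 0) * t 0 + (x 1 - y 1) * t 1 + (x 2 - y 2) * t 2
            = ((x 0 - y 0) ^ 2 + (x 1 - y 1) ^ 2 + (x 2 - y 2) ^ 2) / (2 * n) := by
          simp only [ht]; ring
        rw [show (0 : ℝ) + (x 0 * t 0 + x 1 * t 1 + x 2 * t 2)
            - ((0 : ℝ) + (y 0 * t 0 + y 1 * t 1 + y 2 * t 2))
            = (x 0 - y 0) * t 0 + (x 1 - y 1) * t 1 + (x 2 - y 2) * t 2 by ring, h2, hsum]
        field_simp
      push_cast [← h]
      ring
    have hmem : ‖x - y‖ / 2 ∈ S := by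
      refine ⟨vmat t, vmat_herm t, ?_, ?_⟩
      · rw [comm_vmat, opNorm_cmat, htsum,
          show (1 / 4 : ℝ) = (1 / 2) ^ 2 by norm_num, Real.sqrt_sq (by norm_num)]
        norm_num
      · rw [hd, Complex.norm_real, Real.norm_eq_abs, abs_of_nonneg (by positivity), hndef]
    exact le_csSup hbdd hmem
end
end

section
/- Let N ≥ 1. The spectral distance between the coherent states at the north and south poles of the fuzzy sphere is d_N(ψ^N_(0,0), ψ^N_(0,π)) = Σ_{k=1}^{N} 1/√(k(N−k+1)). -/
noncomputable section
open Matrix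

/-- The Bloch coherent state vector `|φ,θ⟩_N`, with component at index `i` (i.e. `m = i − N/2`)
equal to `C(N, i)^(1/2) e^(−i m φ) (sin(θ/2))^(N/2+m) (cos(θ/2))^(N/2−m)`. -/
def blochVec (N : ℕ) (φ θ : ℝ) : Fin (N + 1) → ℂ := fun i =>
  (Real.sqrt (N.choose i) : ℂ) * Complex.exp (-Complex.I * ((i : ℂ) - (N : ℂ) / 2) * (φ : ℂ)) *
    (Real.sin (θ / 2) : ℂ) ^ (i : ℕ) * (Real.cos (θ / 2) : ℂ) ^ (N - (i : ℕ))

/-- The Bloch coherent state `ψ^N_(φ,θ)(a) = ⟨φ,θ| a |φ,θ⟩_N`. -/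
def psiState (N : ℕ) (a : Matrix (Fin (N + 1)) (Fin (N + 1)) ℂ) (φ θ : ℝ) : ℂ :=
  star (blochVec N φ θ) ⬝ᵥ a.mulVec (blochVec N φ θ)

/-! ### Auxiliary lemmas -/


open scoped Matrix.Norms.L2Operator

lemma coordLe {n : Type*} [Fintype n] (v : EuclideanSpace ℂ n) (i : n) : ‖v i‖ ≤ ‖v‖ := by
  rw [EuclideanSpace.norm_eq, Real.le_sqrt (norm_nonneg _) (by positivity)]
  exact Finset.single_le_sum (f := fun j => ‖v j‖ ^ 2) (fun j _ => by positivity)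
    (Finset.mem_univ i)

lemma entryLe {n : Type*} [Fintype n] [DecidableEq n] (M : Matrix n n ℂ) (i j : n) :
    ‖M i j‖ ≤ ‖Matrix.toEuclideanCLM (𝕜 := ℂ) M‖ := by
  have h := Matrix.l2_opNorm_mulVec M (EuclideanSpace.single j (1:ℂ))
  rw [EuclideanSpace.norm_single, norm_one, mul_one] at h
  have h2 := (coordLe ((EuclideanSpace.equiv n ℂ).symm <|
    M *ᵥ (EuclideanSpace.single j (1:ℂ))) i).trans h
  have h3 : ((EuclideanSpace.equiv n ℂ).symm <| M *ᵥ (EuclideanSpace.single j (1:ℂ))) i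
      = M i j := by
    simp [Matrix.mulVec, dotProduct, EuclideanSpace.single_apply]
  rw [h3, Matrix.cstar_norm_def] at h2
  exact h2

lemma normLeOne {n : Type*} [Fintype n] [DecidableEq n] (M : Matrix n n ℂ)
    (h : (Mᴴ * M) * (Mᴴ * M) = Mᴴ * M) : ‖Matrix.toEuclideanCLM (𝕜 := ℂ) M‖ ≤ 1 := by
  rw [← Matrix.cstar_norm_def]
  have hP : (Mᴴ * M)ᴴ = Mᴴ * M := by
    rw [Matrix.conjTranspose_mul, Matrix.conjTranspose_conjTranspose]
  have h1 : ‖Mᴴ * M‖ * ‖Mᴴ * M‖ = ‖Mᴴ * M‖ := by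
    conv_lhs => rw [← Matrix.l2_opNorm_conjTranspose_mul_self (Mᴴ * M), hP, h]
  have h2 : ‖M‖ * ‖M‖ = ‖Mᴴ * M‖ := (Matrix.l2_opNorm_conjTranspose_mul_self M).symm
  have h3 : (0:ℝ) ≤ ‖M‖ := norm_nonneg _
  have h4 : (0:ℝ) ≤ ‖Mᴴ * M‖ := norm_nonneg _
  have h5 : ‖Mᴴ * M‖ ≤ 1 := by nlinarith
  nlinarith

lemma bloch_north (N : ℕ) : blochVec N 0 0 = fun i => if i = 0 then 1 else 0 := by
  funext i
  simp only [blochVec]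
  rw [show ((0:ℝ):ℂ) = 0 by norm_num]
  rw [mul_zero, Complex.exp_zero]
  norm_num [Real.sin_zero, Real.cos_zero]
  by_cases h : i = 0
  · subst h; simp
  · have : (i : ℕ) ≠ 0 := fun hc => h (Fin.ext hc)
    simp [zero_pow this, h]

lemma bloch_south (N : ℕ) : blochVec N 0 Real.pi = fun i => if i = Fin.last N then 1 else 0 := by
  funext i
  simp only [blochVec]
  rw [show ((0:ℝ):ℂ) = 0 by norm_num]
  rw [mul_zero, Complex.exp_zero]
  rw [Real.sin_pi_div_two, Real.cos_pi_div_two]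
  by_cases h : i = Fin.last N
  · subst h; simp [Fin.last]
  · have h2 : (i : ℕ) < N := by
      have := i.isLt
      have : (i:ℕ) ≠ N := fun hc => h (Fin.ext hc)
      omega
    have : N - (i:ℕ) ≠ 0 := by omega
    simp [zero_pow this, h]

lemma psi_eval (N : ℕ) (a : Matrix (Fin (N+1)) (Fin (N+1)) ℂ) (θ : ℝ) (i0 : Fin (N+1))
    (hv : blochVec N 0 θ = fun i => if i = i0 then 1 else 0) :
    psiState N a 0 θ = a i0 i0 := by
  simp [psiState, hv, dotProduct, Matrix.mulVec, apply_ite star,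
    Finset.sum_ite_eq, Finset.mul_sum, ite_and]

lemma comm_blocks (N : ℕ) (a : Matrix (Fin (N+1)) (Fin (N+1)) ℂ) :
    DiracOp N * tensorOne N a - tensorOne N a * DiracOp N =
    Matrix.fromBlocks ((1 + Hmat N) * a - a * (1 + Hmat N)) (Fmat N * a - a * Fmat N)
      (Emat N * a - a * Emat N) ((1 - Hmat N) * a - a * (1 - Hmat N)) := by
  simp only [DiracOp, tensorOne, Matrix.fromBlocks_multiply, mul_zero, zero_mul, add_zero,
    zero_add, sub_eq_add_neg, ← Matrix.fromBlocks_neg, ← Matrix.fromBlocks_add]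

lemma EComm_entry (N : ℕ) (a : Matrix (Fin (N+1)) (Fin (N+1)) ℂ) (q : Fin (N+1))
    (hq : (q:ℕ) < N) :
    (Emat N * a - a * Emat N) ⟨(q:ℕ)+1, by omega⟩ q =
      (Real.sqrt ((N - (q:ℕ)) * ((q:ℕ)+1)) : ℂ) *
        (a q q - a ⟨(q:ℕ)+1, by omega⟩ ⟨(q:ℕ)+1, by omega⟩) := by
  set p : Fin (N+1) := ⟨(q:ℕ)+1, by omega⟩ with hp
  have hpq : (p : ℕ) = (q:ℕ)+1 := rfl
  have h1 : (Emat N * a) p q = (Real.sqrt ((N - (q:ℕ)) * ((q:ℕ)+1)) : ℂ) * a q q := by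
    rw [Matrix.mul_apply, Finset.sum_eq_single q]
    · simp [Emat, hpq]
    · intro s _ hs
      have : (p:ℕ) ≠ (s:ℕ)+1 := by
        intro hc; exact hs (Fin.ext (by omega))
      simp [Emat, this]
    · intro h; exact absurd (Finset.mem_univ q) h
  have h2 : (a * Emat N) p q = (Real.sqrt ((N - (q:ℕ)) * ((q:ℕ)+1)) : ℂ) * a p p := by
    rw [Matrix.mul_apply, Finset.sum_eq_single p]
    · simp [Emat, hpq]; ring
    · intro s _ hs
      have : (s:ℕ) ≠ (q:ℕ)+1 := by
        intro hc; exact hs (Fin.ext (by omega))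
      simp [Emat, this]
    · intro h; exact absurd (Finset.mem_univ p) h
  simp only [Matrix.sub_apply, h1, h2]
  ring

lemma step_bound (N : ℕ) (a : Matrix (Fin (N+1)) (Fin (N+1)) ℂ)
    (hK : opNorm (DiracOp N * tensorOne N a - tensorOne N a * DiracOp N) ≤ 1)
    (q : ℕ) (hq : q < N) :
    ‖a ⟨q, by omega⟩ ⟨q, by omega⟩ - a ⟨q+1, by omega⟩ ⟨q+1, by omega⟩‖ ≤
      1 / Real.sqrt ((N - q) * (q + 1)) := by
  set qF : Fin (N+1) := ⟨q, by omega⟩ with hqF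
  have hqc : (qF : ℕ) = q := rfl
  set K := DiracOp N * tensorOne N a - tensorOne N a * DiracOp N with hKdef
  have hent := entryLe K (Sum.inr (⟨q+1, by omega⟩ : Fin (N+1))) (Sum.inl qF)
  have hKe : K (Sum.inr (⟨q+1, by omega⟩ : Fin (N+1))) (Sum.inl qF) =
      (Real.sqrt ((N - q) * (q + 1)) : ℂ) *
        (a qF qF - a ⟨q+1, by omega⟩ ⟨q+1, by omega⟩) := by
    rw [hKdef, comm_blocks]
    have := EComm_entry N a qF (by omega)
    simpa [Matrix.fromBlocks_apply₂₁] using this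
  rw [hKe] at hent
  have hle1 : ‖(Real.sqrt ((N - q) * (q + 1)) : ℂ) *
      (a qF qF - a ⟨q+1, by omega⟩ ⟨q+1, by omega⟩)‖ ≤ 1 := le_trans hent hK
  rw [norm_mul] at hle1
  have hargpos : (0:ℝ) < ((N:ℝ) - q) * ((q:ℝ) + 1) := by
    have : (q:ℝ) < N := by exact_mod_cast hq
    nlinarith [Nat.cast_nonneg (α := ℝ) q]
  have hsq : 0 < Real.sqrt (((N:ℝ) - q) * ((q:ℝ) + 1)) := Real.sqrt_pos.mpr hargpos
  have habs : ‖(Real.sqrt ((N - q) * (q + 1)) : ℂ)‖ =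
      Real.sqrt (((N:ℝ) - q) * ((q:ℝ) + 1)) := by
    rw [Complex.norm_real, Real.norm_eq_abs, abs_of_nonneg (Real.sqrt_nonneg _)]
  rw [habs] at hle1
  rw [le_div_iff₀ hsq, mul_comm]
  exact hle1

/-! ### The optimal element -/

def dv (N : ℕ) : Fin (N+1) → ℝ := fun i =>
  ∑ k ∈ Finset.Icc 1 (i:ℕ), 1 / Real.sqrt (k * (N + 1 - k))

lemma dv_succ (N : ℕ) (q : ℕ) (hq : q < N) :
    dv N ⟨q+1, by omega⟩ - dv N ⟨q, by omega⟩ = 1 / Real.sqrt ((q+1) * ((N:ℝ) - q)) := by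
  simp only [dv]
  rw [Finset.sum_Icc_succ_top (by omega : 1 ≤ q + 1), add_sub_cancel_left]
  congr 2
  push_cast
  ring

def am (N : ℕ) : Matrix (Fin (N+1)) (Fin (N+1)) ℂ :=
  Matrix.diagonal (fun i => ((dv N i : ℝ) : ℂ))

lemma sqrt_key (N q : ℕ) (hq : q < N) :
    Real.sqrt (((N:ℝ) - q) * ((q:ℝ) + 1)) * (1 / Real.sqrt (((q:ℝ)+1) * ((N:ℝ) - q))) = 1 := by
  have h1 : (0:ℝ) < ((q:ℝ)+1) * ((N:ℝ) - q) := by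
    have : (q:ℝ) < N := by exact_mod_cast hq
    nlinarith [Nat.cast_nonneg (α := ℝ) q]
  rw [mul_comm ((N:ℝ) - q) ((q:ℝ)+1), mul_one_div, div_self]
  exact ne_of_gt (Real.sqrt_pos.mpr h1)

def Cm (N : ℕ) : Matrix (Fin (N+1)) (Fin (N+1)) ℂ :=
  fun p q => if (p:ℕ) = (q:ℕ) + 1 then (-1:ℂ) else 0
def Bm (N : ℕ) : Matrix (Fin (N+1)) (Fin (N+1)) ℂ :=
  fun p q => if (q:ℕ) = (p:ℕ) + 1 then (1:ℂ) else 0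

lemma Cmat_eq (N : ℕ) : Emat N * am N - am N * Emat N = Cm N := by
  funext p q
  simp only [Matrix.sub_apply, am, Matrix.mul_diagonal, Matrix.diagonal_mul, Emat, Cm]
  by_cases h : (p:ℕ) = (q:ℕ) + 1
  · simp only [if_pos h]
    have hq : (q:ℕ) < N := by have := p.isLt; omega
    have hp : p = ⟨(q:ℕ)+1, by omega⟩ := Fin.ext h
    have hreal : Real.sqrt (((N:ℝ) - q) * ((q:ℝ)+1)) * (dv N q - dv N p) = -1 := by
      have hd := dv_succ N q hq
      rw [hp, show dv N q = dv N ⟨(q:ℕ), by omega⟩ from rfl]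
      have : dv N ⟨(q:ℕ), by omega⟩ - dv N ⟨(q:ℕ)+1, by omega⟩
          = -(1 / Real.sqrt ((q+1) * ((N:ℝ) - q))) := by rw [← hd]; ring
      rw [this, mul_neg, sqrt_key N q hq]
    calc (Real.sqrt ((N - (q:ℕ)) * ((q:ℕ) + 1)) : ℂ) * ((dv N q : ℝ) : ℂ)
          - ((dv N p : ℝ) : ℂ) * (Real.sqrt ((N - (q:ℕ)) * ((q:ℕ) + 1)) : ℂ)
        = ((Real.sqrt (((N:ℝ) - q) * ((q:ℝ)+1)) * (dv N q - dv N p) : ℝ) : ℂ) := by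
          push_cast; ring
      _ = -1 := by rw [hreal]; norm_num
  · simp [h]

lemma Bmat_eq (N : ℕ) : Fmat N * am N - am N * Fmat N = Bm N := by
  funext p q
  simp only [Matrix.sub_apply, am, Matrix.mul_diagonal, Matrix.diagonal_mul, Fmat,
    Matrix.conjTranspose_apply, Emat, Bm]
  by_cases h : (q:ℕ) = (p:ℕ) + 1
  · simp only [if_pos h, star_trivial, RCLike.star_def, map_ofNat, Complex.conj_ofReal]
    have hp : (p:ℕ) < N := by have := q.isLt; omega
    have hq : q = ⟨(p:ℕ)+1, by omega⟩ := Fin.ext h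
    have hreal : Real.sqrt (((N:ℝ) - p) * ((p:ℝ)+1)) * (dv N q - dv N p) = 1 := by
      rw [hq, show dv N p = dv N ⟨(p:ℕ), by omega⟩ from rfl, dv_succ N p hp]
      exact sqrt_key N p hp
    calc ((Real.sqrt ((N - (p:ℕ)) * ((p:ℕ) + 1)) : ℝ) : ℂ) * ((dv N q : ℝ) : ℂ)
          - ((dv N p : ℝ) : ℂ) * ((Real.sqrt ((N - (p:ℕ)) * ((p:ℕ) + 1)) : ℝ) : ℂ)
        = ((Real.sqrt (((N:ℝ) - p) * ((p:ℝ)+1)) * (dv N q - dv N p) : ℝ) : ℂ) := by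
          push_cast; ring
      _ = 1 := by rw [hreal]; norm_num
  · simp [h]

lemma CtC (N : ℕ) : (Cm N)ᴴ * Cm N =
    Matrix.diagonal (fun q : Fin (N+1) => if (q:ℕ) < N then (1:ℂ) else 0) := by
  ext q q'
  rw [Matrix.mul_apply]
  simp only [Matrix.conjTranspose_apply, Cm]
  by_cases hqq : q = q'
  · subst hqq
    by_cases hN : (q:ℕ) < N
    · rw [Finset.sum_eq_single (⟨(q:ℕ)+1, by omega⟩ : Fin (N+1))]
      · simp [Matrix.diagonal_apply_eq, hN]
      · intro p _ hp
        have : (p:ℕ) ≠ (q:ℕ)+1 := fun hc => hp (Fin.ext hc)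
        simp [this]
      · intro h; exact absurd (Finset.mem_univ _) h
    · rw [Finset.sum_eq_zero, Matrix.diagonal_apply_eq]
      · simp [hN]
      · intro p _
        have : (p:ℕ) ≠ (q:ℕ)+1 := by have := p.isLt; omega
        simp [this]
  · rw [Finset.sum_eq_zero, Matrix.diagonal_apply_ne _ hqq]
    intro p _
    by_cases h1 : (p:ℕ) = (q:ℕ)+1
    · have h2 : (p:ℕ) ≠ (q':ℕ)+1 := by
        intro hc; exact hqq (Fin.ext (by omega))
      simp [h2]
    · simp [h1]

lemma BtB (N : ℕ) : (Bm N)ᴴ * Bm N =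
    Matrix.diagonal (fun q : Fin (N+1) => if 1 ≤ (q:ℕ) then (1:ℂ) else 0) := by
  ext q q'
  rw [Matrix.mul_apply]
  simp only [Matrix.conjTranspose_apply, Bm]
  by_cases hqq : q = q'
  · subst hqq
    by_cases hN : 1 ≤ (q:ℕ)
    · rw [Finset.sum_eq_single (⟨(q:ℕ)-1, by omega⟩ : Fin (N+1))]
      · have hc : (q:ℕ) = ((⟨(q:ℕ)-1, by omega⟩ : Fin (N+1)) : ℕ) + 1 := by
          show (q:ℕ) = (q:ℕ) - 1 + 1; omega
        rw [if_pos hc, Matrix.diagonal_apply_eq, if_pos hN]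
        simp
      · intro p _ hp
        have : (q:ℕ) ≠ (p:ℕ)+1 := by
          intro hc
          apply hp; apply Fin.ext
          show (p:ℕ) = (q:ℕ) - 1
          omega
        simp [this]
      · intro h; exact absurd (Finset.mem_univ _) h
    · rw [Finset.sum_eq_zero, Matrix.diagonal_apply_eq]
      · simp [hN]
      · intro p _
        have : (q:ℕ) ≠ (p:ℕ)+1 := by omega
        simp [this]
  · rw [Finset.sum_eq_zero, Matrix.diagonal_apply_ne _ hqq]
    intro p _
    by_cases h1 : (q:ℕ) = (p:ℕ)+1
    · have h2 : (q':ℕ) ≠ (p:ℕ)+1 := by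
        intro hc; exact hqq (Fin.ext (by omega))
      simp [h2]
    · simp [h1]

lemma diag_comm (N : ℕ) (u v : Fin (N+1) → ℂ) :
    Matrix.diagonal u * Matrix.diagonal v = Matrix.diagonal v * Matrix.diagonal u := by
  rw [Matrix.diagonal_mul_diagonal, Matrix.diagonal_mul_diagonal]
  exact congrArg Matrix.diagonal (funext fun i => mul_comm (u i) (v i))

lemma K_eq (N : ℕ) : DiracOp N * tensorOne N (am N) - tensorOne N (am N) * DiracOp N =
    Matrix.fromBlocks 0 (Bm N) (Cm N) 0 := by
  rw [comm_blocks]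
  have hcomm : Hmat N * am N = am N * Hmat N := by
    rw [Hmat, am]; exact diag_comm N _ _
  have h1 : (1 + Hmat N) * am N - am N * (1 + Hmat N) = 0 := by
    rw [add_mul, one_mul, mul_add, mul_one, hcomm]; abel
  have h2 : (1 - Hmat N) * am N - am N * (1 - Hmat N) = 0 := by
    rw [sub_mul, one_mul, mul_sub, mul_one, hcomm]; abel
  rw [h1, h2, Cmat_eq, Bmat_eq]

lemma K_norm (N : ℕ) : opNorm (Matrix.fromBlocks 0 (Bm N) (Cm N) (0 : Matrix (Fin (N+1)) (Fin (N+1)) ℂ)) ≤ 1 := by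
  apply normLeOne
  have hKH : (Matrix.fromBlocks 0 (Bm N) (Cm N) (0 : Matrix (Fin (N+1)) (Fin (N+1)) ℂ))ᴴ =
      Matrix.fromBlocks 0 (Cm N)ᴴ (Bm N)ᴴ 0 := by
    simp [Matrix.fromBlocks_conjTranspose]
  rw [hKH, Matrix.fromBlocks_multiply]
  simp only [Matrix.zero_mul, Matrix.mul_zero, add_zero, zero_add]
  rw [CtC, BtB, Matrix.fromBlocks_multiply]
  simp only [Matrix.zero_mul, Matrix.mul_zero, add_zero, zero_add,
    Matrix.diagonal_mul_diagonal]
  ext i j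
  rcases i with q | q <;> rcases j with p | p <;>
    simp only [Matrix.fromBlocks_apply₁₁, Matrix.fromBlocks_apply₁₂, Matrix.fromBlocks_apply₂₁,
      Matrix.fromBlocks_apply₂₂, Matrix.diagonal_apply, Matrix.zero_apply] <;>
    split_ifs <;> norm_num

lemma sum_reindex (N : ℕ) :
    ∑ k ∈ Finset.Icc 1 N, 1 / Real.sqrt (k * (N + 1 - k)) =
      ∑ q ∈ Finset.range N, 1 / Real.sqrt (((N:ℝ) - q) * ((q:ℝ) + 1)) := by
  rw [← Finset.Ico_add_one_right_eq_Icc, Finset.sum_Ico_eq_sum_range]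
  refine Finset.sum_congr (by norm_num) fun q hq => ?_
  congr 2
  push_cast
  ring

theorem specDist_poles (N : ℕ) (hN : 1 ≤ N) :
    specDist N (fun a => psiState N a 0 0) (fun a => psiState N a 0 Real.pi) =
      ∑ k ∈ Finset.Icc 1 N, 1 / Real.sqrt (k * (N + 1 - k)) := by
  set S := ∑ k ∈ Finset.Icc 1 N, 1 / Real.sqrt (k * (N + 1 - k)) with hS
  have hS0 : 0 ≤ S := Finset.sum_nonneg (fun k _ => by positivity)
  set SS := {r : ℝ | ∃ a : Matrix (Fin (N + 1)) (Fin (N + 1)) ℂ, a.IsHermitian ∧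
    opNorm (DiracOp N * tensorOne N a - tensorOne N a * DiracOp N) ≤ 1 ∧
    r = ‖psiState N a 0 0 - psiState N a 0 Real.pi‖} with hSS
  have hspec : specDist N (fun a => psiState N a 0 0) (fun a => psiState N a 0 Real.pi) =
      sSup SS := rfl
  -- membership of S
  have hmem : S ∈ SS := by
    refine ⟨am N, ?_, ?_, ?_⟩
    · rw [Matrix.IsHermitian, am, Matrix.diagonal_conjTranspose]
      have hst : (star fun i : Fin (N+1) => ((dv N i : ℝ) : ℂ)) =
          fun i : Fin (N+1) => ((dv N i : ℝ) : ℂ) := by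
        funext i
        show star ((dv N i : ℝ) : ℂ) = ((dv N i : ℝ) : ℂ)
        rw [Complex.star_def, Complex.conj_ofReal]
      rw [hst]
    · rw [K_eq]; exact K_norm N
    · rw [psi_eval N (am N) 0 0 (bloch_north N), psi_eval N (am N) Real.pi (Fin.last N)
        (bloch_south N), am, Matrix.diagonal_apply_eq, Matrix.diagonal_apply_eq]
      have h0 : dv N 0 = 0 := by
        simp [dv, show ((0 : Fin (N+1)) : ℕ) = 0 from rfl]
      have hlast : dv N (Fin.last N) = S := by
        simp [dv, Fin.last, hS]
      rw [h0, hlast]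
      rw [show ((0:ℝ):ℂ) - ((S:ℝ):ℂ) = ((-S : ℝ) : ℂ) by push_cast; ring]
      rw [Complex.norm_real, Real.norm_eq_abs, abs_of_nonpos (by linarith)]
      ring
  -- upper bound
  have hub : ∀ r ∈ SS, r ≤ S := by
    rintro r ⟨a, _, hnorm, hr⟩
    rw [psi_eval N a 0 0 (bloch_north N), psi_eval N a Real.pi (Fin.last N) (bloch_south N)]
      at hr
    set f : ℕ → ℂ := fun k => a ⟨min k N, by omega⟩ ⟨min k N, by omega⟩ with hf
    have h0 : f 0 = a 0 0 := by
      simp only [hf]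
      congr 1 <;> exact Fin.ext (by simp)
    have hNf : f N = a (Fin.last N) (Fin.last N) := by
      simp only [hf]
      congr 1 <;> exact Fin.ext (by simp [Fin.last])
    have htel : ∑ k ∈ Finset.range N, (f (k+1) - f k) = f N - f 0 :=
      Finset.sum_range_sub f N
    have hkey : a 0 0 - a (Fin.last N) (Fin.last N) =
        -(∑ k ∈ Finset.range N, (f (k+1) - f k)) := by
      rw [htel, h0, hNf]; ring
    rw [hr, hkey, norm_neg]
    calc ‖∑ k ∈ Finset.range N, (f (k+1) - f k)‖
        ≤ ∑ k ∈ Finset.range N, ‖f (k+1) - f k‖ :=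
          norm_sum_le _ _
      _ ≤ ∑ k ∈ Finset.range N, 1 / Real.sqrt (((N:ℝ) - k) * ((k:ℝ) + 1)) := by
          apply Finset.sum_le_sum
          intro k hk
          have hkN : k < N := Finset.mem_range.mp hk
          have hfk : f k = a ⟨k, by omega⟩ ⟨k, by omega⟩ := by
            simp only [hf]
            congr 1 <;> exact Fin.ext (by simp [Nat.min_eq_left (by omega : k ≤ N)])
          have hfk1 : f (k+1) = a ⟨k+1, by omega⟩ ⟨k+1, by omega⟩ := by
            simp only [hf]
            congr 1 <;> exact Fin.ext (by simp [Nat.min_eq_left (by omega : k+1 ≤ N)])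
          rw [hfk, hfk1, norm_sub_rev]
          exact step_bound N a hnorm k hkN
      _ = S := by rw [hS, sum_reindex N]
  rw [hspec]
  exact le_antisymm (csSup_le ⟨S, hmem⟩ hub) (le_csSup ⟨S, hub⟩ hmem)
end
end

section
/- Let N ≥ 1. For every θ ∈ [0, π], the auxiliary distance satisfies ρ_N(θ) = Σ_{n=1}^{N} C(N, n) (sin(θ/2))^{2n} (cos(θ/2))^{2(N−n)} · Σ_{k=1}^{n} 1/√(k(N−k+1)). -/
noncomputable section
open Matrix

/-- The auxiliary distance `ρ_N(θ)`: the supremum of `|ψ^N_(0,θ)(a) − ψ^N_(0,0)(a)|` over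
hermitian *diagonal* matrices `a` with `‖[D_N, a ⊗ 1₂]‖ ≤ 1`. -/
def rhoAux (N : ℕ) (θ : ℝ) : ℝ :=
  sSup {r : ℝ | ∃ a : Matrix (Fin (N + 1)) (Fin (N + 1)) ℂ, a.IsHermitian ∧ a.IsDiag ∧
    opNorm (DiracOp N * tensorOne N a - tensorOne N a * DiracOp N) ≤ 1 ∧
    r = ‖psiState N a 0 θ - psiState N a 0 0‖}

/-! ### Auxiliary lemmas -/

namespace RhoAuxProof

lemma toEuclideanCLM_apply_coord {n : Type*} [Fintype n] [DecidableEq n]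
    (M : Matrix n n ℂ) (x : EuclideanSpace ℂ n) (i : n) :
    (Matrix.toEuclideanCLM (𝕜 := ℂ) M x) i = M.mulVec x i := rfl

lemma coord_le_norm {n : Type*} [Fintype n] (y : EuclideanSpace ℂ n) (i : n) :
    ‖y i‖ ≤ ‖y‖ := by
  rw [EuclideanSpace.norm_eq]
  have h : ‖y i‖ ^ 2 ≤ ∑ j, ‖y j‖ ^ 2 :=
    Finset.single_le_sum (f := fun j => ‖y j‖ ^ 2) (fun j _ => sq_nonneg _) (Finset.mem_univ i)
  calc ‖y i‖ = Real.sqrt (‖y i‖ ^ 2) := by rw [Real.sqrt_sq (norm_nonneg _)]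
    _ ≤ _ := Real.sqrt_le_sqrt h

lemma entry_le_opNorm {n : Type*} [Fintype n] [DecidableEq n]
    (M : Matrix n n ℂ) (i j : n) : ‖M i j‖ ≤ opNorm M := by
  have hx : ‖(EuclideanSpace.single j (1:ℂ) : EuclideanSpace ℂ n)‖ = 1 := by
    simp [EuclideanSpace.norm_single]
  have h1 := (Matrix.toEuclideanCLM (𝕜 := ℂ) M).le_opNorm (EuclideanSpace.single j (1:ℂ))
  rw [hx, mul_one] at h1
  have hcoord : (Matrix.toEuclideanCLM (𝕜 := ℂ) M (EuclideanSpace.single j 1)) i = M i j := by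
    rw [toEuclideanCLM_apply_coord]
    have h2 : (EuclideanSpace.single j (1:ℂ) : n → ℂ) = Pi.single j 1 := rfl
    simp [h2]
  calc ‖M i j‖ = ‖(Matrix.toEuclideanCLM (𝕜 := ℂ) M (EuclideanSpace.single j 1)) i‖ := by
        rw [hcoord]
    _ ≤ ‖Matrix.toEuclideanCLM (𝕜 := ℂ) M (EuclideanSpace.single j 1)‖ := coord_le_norm _ _
    _ ≤ _ := h1

lemma opNorm_le_one_of_perm {n : Type*} [Fintype n] [DecidableEq n]
    (M : Matrix n n ℂ) (σ : Equiv.Perm n)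
    (h0 : ∀ i j, j ≠ σ i → M i j = 0) (h1 : ∀ i, ‖M i (σ i)‖ ≤ 1) :
    opNorm M ≤ 1 := by
  refine ContinuousLinearMap.opNorm_le_bound _ zero_le_one (fun x => ?_)
  rw [one_mul]
  have hrow : ∀ i, (Matrix.toEuclideanCLM (𝕜 := ℂ) M x) i = M i (σ i) * x (σ i) := by
    intro i
    rw [toEuclideanCLM_apply_coord, Matrix.mulVec, dotProduct]
    rw [Finset.sum_eq_single (σ i)]
    · intro b _ hb; rw [h0 i b hb, zero_mul]
    · intro h; exact absurd (Finset.mem_univ _) h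
  rw [EuclideanSpace.norm_eq, EuclideanSpace.norm_eq]
  apply Real.sqrt_le_sqrt
  calc ∑ i, ‖(Matrix.toEuclideanCLM (𝕜 := ℂ) M x) i‖ ^ 2
      ≤ ∑ i, ‖x (σ i)‖ ^ 2 := by
        refine Finset.sum_le_sum (fun i _ => ?_)
        rw [hrow i, norm_mul]
        have := mul_le_mul_of_nonneg_right (h1 i) (norm_nonneg (x (σ i)))
        rw [one_mul] at this
        exact pow_le_pow_left₀ (by positivity) this 2
    _ = ∑ i, ‖x i‖ ^ 2 := Equiv.sum_comp σ (fun j => ‖x j‖ ^ 2)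

lemma commutator_eq (N : ℕ) (dd : Fin (N+1) → ℂ) :
    DiracOp N * tensorOne N (Matrix.diagonal dd) -
      tensorOne N (Matrix.diagonal dd) * DiracOp N =
    Matrix.fromBlocks 0 (Matrix.of fun p q => Fmat N p q * (dd q - dd p))
      (Matrix.of fun p q => Emat N p q * (dd q - dd p)) 0 := by
  rw [DiracOp, tensorOne, Matrix.fromBlocks_multiply, Matrix.fromBlocks_multiply]
  ext (p|p) (q|q)
  · simp only [Matrix.sub_apply, Matrix.fromBlocks_apply₁₁, Matrix.add_apply,
      Matrix.mul_diagonal, Matrix.diagonal_mul, Matrix.one_apply, Matrix.zero_apply,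
      Matrix.mul_zero, Matrix.zero_mul, add_zero, zero_add, Hmat,
      Matrix.diagonal_apply, Matrix.of_apply]
    split_ifs with h
    · subst h; ring
    · simp
  · simp only [Matrix.sub_apply, Matrix.fromBlocks_apply₁₂, Matrix.add_apply,
      Matrix.mul_diagonal, Matrix.diagonal_mul, Matrix.zero_apply,
      Matrix.mul_zero, Matrix.zero_mul, add_zero, zero_add, Matrix.of_apply]
    ring
  · simp only [Matrix.sub_apply, Matrix.fromBlocks_apply₂₁, Matrix.add_apply,
      Matrix.mul_diagonal, Matrix.diagonal_mul, Matrix.zero_apply,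
      Matrix.mul_zero, Matrix.zero_mul, add_zero, zero_add, Matrix.of_apply]
    ring
  · simp only [Matrix.sub_apply, Matrix.fromBlocks_apply₂₂, Matrix.add_apply,
      Matrix.mul_diagonal, Matrix.diagonal_mul, Matrix.one_apply, Matrix.zero_apply,
      Matrix.mul_zero, Matrix.zero_mul, add_zero, zero_add, Hmat,
      Matrix.diagonal_apply, Matrix.sub_apply, Matrix.of_apply]
    split_ifs with h
    · subst h; ring
    · simp

/-- The weight of the binomial distribution. -/
def wgt (N : ℕ) (θ : ℝ) (n : ℕ) : ℝ :=
  (N.choose n : ℝ) * Real.sin (θ/2) ^ (2*n) * Real.cos (θ/2) ^ (2*(N-n))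

/-- The increment bound. -/
def dstep (N k : ℕ) : ℝ := 1 / Real.sqrt (k * ((N:ℝ) + 1 - k))

/-- Partial sums of the increments. -/
def Gfun (N n : ℕ) : ℝ := ∑ k ∈ Finset.range n, dstep N (k+1)

lemma psi_diag (N : ℕ) (dd : Fin (N+1) → ℂ) (θ : ℝ) :
    psiState N (Matrix.diagonal dd) 0 θ =
      ∑ i : Fin (N+1), ((wgt N θ (i:ℕ) : ℝ) : ℂ) * dd i := by
  rw [psiState, dotProduct]
  refine Finset.sum_congr rfl (fun i _ => ?_)
  rw [Matrix.mulVec_diagonal]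
  have hb : blochVec N 0 θ i = (((Real.sqrt (N.choose i) * Real.sin (θ/2) ^ (i:ℕ) *
      Real.cos (θ/2) ^ (N - (i:ℕ)) : ℝ)) : ℂ) := by
    simp [blochVec]
  rw [Pi.star_apply, hb, Complex.star_def, Complex.conj_ofReal]
  have h2 : wgt N θ (i:ℕ)
      = (Real.sqrt (N.choose i) * Real.sin (θ/2) ^ (i:ℕ) * Real.cos (θ/2) ^ (N - (i:ℕ))) *
        (Real.sqrt (N.choose i) * Real.sin (θ/2) ^ (i:ℕ) * Real.cos (θ/2) ^ (N - (i:ℕ))) := by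
    have hc : Real.sqrt (N.choose i) ^ 2 = (N.choose i : ℝ) :=
      Real.sq_sqrt (Nat.cast_nonneg _)
    rw [wgt]
    set cc := Real.sqrt (N.choose i) with hcc
    rw [← hc]; ring
  rw [h2]
  push_cast
  ring

lemma wgt_zero_eval (N : ℕ) (n : ℕ) :
    wgt N 0 n = if n = 0 then 1 else 0 := by
  rw [wgt]
  split_ifs with h
  · subst h; norm_num
  · have : Real.sin (0/2 : ℝ) = 0 := by norm_num
    rw [this, zero_pow (by omega), mul_zero, zero_mul]

lemma psi_diag_zero (N : ℕ) (dd : Fin (N+1) → ℂ) :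
    psiState N (Matrix.diagonal dd) 0 0 = dd 0 := by
  rw [psi_diag]
  rw [Finset.sum_eq_single (0 : Fin (N+1))]
  · rw [wgt_zero_eval]
    norm_num
  · intro b _ hb
    have hb' : (b:ℕ) ≠ 0 := by exact fun h => hb (Fin.ext (by rw [h, Fin.val_zero]))
    rw [wgt_zero_eval, if_neg hb']
    simp
  · intro h; exact absurd (Finset.mem_univ _) h

lemma wgt_nonneg (N : ℕ) (θ : ℝ) (n : ℕ) : 0 ≤ wgt N θ n := by
  rw [wgt, pow_mul, pow_mul]
  positivity

lemma sum_wgt (N : ℕ) (θ : ℝ) : ∑ i : Fin (N+1), wgt N θ (i:ℕ) = 1 := by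
  rw [Fin.sum_univ_eq_sum_range (fun n => wgt N θ n) (N+1)]
  calc ∑ n ∈ Finset.range (N+1), wgt N θ n
      = ∑ n ∈ Finset.range (N+1),
          (Real.sin (θ/2) ^ 2) ^ n * (Real.cos (θ/2) ^ 2) ^ (N - n) * (N.choose n : ℝ) := by
        refine Finset.sum_congr rfl (fun n _ => ?_)
        rw [wgt, pow_mul, pow_mul]; ring
    _ = (Real.sin (θ/2) ^ 2 + Real.cos (θ/2) ^ 2) ^ N := (add_pow _ _ N).symm
    _ = 1 := by rw [Real.sin_sq_add_cos_sq, one_pow]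

lemma sum_Icc_one (f : ℕ → ℝ) (n : ℕ) :
    ∑ k ∈ Finset.Icc 1 n, f k = ∑ k ∈ Finset.range n, f (k+1) := by
  rw [← Finset.Ico_add_one_right_eq_Icc, Finset.sum_Ico_eq_sum_range]
  simp [add_comm]

lemma fin_sum_eq (N : ℕ) (f : ℕ → ℝ) (hf : f 0 = 0) :
    ∑ i : Fin (N+1), f (i:ℕ) = ∑ n ∈ Finset.Icc 1 N, f n := by
  rw [Fin.sum_univ_eq_sum_range, Finset.sum_range_succ', hf, add_zero, sum_Icc_one]

lemma dstep_nonneg (N k : ℕ) : 0 ≤ dstep N k := by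
  rw [dstep]; positivity

lemma sqrt_pos_of_lt {N m : ℕ} (h : m < N) :
    0 < Real.sqrt (((N:ℝ) - m) * ((m:ℝ) + 1)) := by
  apply Real.sqrt_pos.mpr
  have : (m:ℝ) < N := by exact_mod_cast h
  nlinarith

lemma hprod {N m : ℕ} (h : m < N) :
    Real.sqrt (((N:ℝ) - m) * ((m:ℝ) + 1)) * dstep N (m+1) = 1 := by
  rw [dstep]
  have harg : ((m+1 : ℕ) : ℝ) * ((N:ℝ) + 1 - ((m+1:ℕ):ℝ)) = ((N:ℝ) - m) * ((m:ℝ) + 1) := by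
    push_cast; ring
  rw [harg, mul_one_div, div_self (ne_of_gt (sqrt_pos_of_lt h))]

lemma Gfun_succ (N k : ℕ) : Gfun N (k+1) = Gfun N k + dstep N (k+1) := by
  rw [Gfun, Gfun, Finset.sum_range_succ]

end RhoAuxProof

open RhoAuxProof

theorem rhoAux_formula (N : ℕ) (hN : 1 ≤ N) (θ : ℝ) (hθ : θ ∈ Set.Icc 0 Real.pi) :
    rhoAux N θ =
      ∑ n ∈ Finset.Icc 1 N, (N.choose n : ℝ) *
        Real.sin (θ / 2) ^ (2 * n) * Real.cos (θ / 2) ^ (2 * (N - n)) *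
        ∑ k ∈ Finset.Icc 1 n, 1 / Real.sqrt (k * (N + 1 - k)) := by
  classical
  set S : ℝ := ∑ n ∈ Finset.Icc 1 N, wgt N θ n * Gfun N n with hS
  have hRHS : (∑ n ∈ Finset.Icc 1 N, (N.choose n : ℝ) *
      Real.sin (θ / 2) ^ (2 * n) * Real.cos (θ / 2) ^ (2 * (N - n)) *
      ∑ k ∈ Finset.Icc 1 n, 1 / Real.sqrt (k * (N + 1 - k))) = S := by
    refine Finset.sum_congr rfl (fun n _ => ?_)
    rw [wgt, Gfun, sum_Icc_one (fun k => 1 / Real.sqrt ((k : ℝ) * ((N:ℝ) + 1 - (k:ℝ)))) n]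
    rfl
  -- the upper bound
  have hub : ∀ r ∈ {r : ℝ | ∃ a : Matrix (Fin (N + 1)) (Fin (N + 1)) ℂ,
      a.IsHermitian ∧ a.IsDiag ∧
      opNorm (DiracOp N * tensorOne N a - tensorOne N a * DiracOp N) ≤ 1 ∧
      r = ‖psiState N a 0 θ - psiState N a 0 0‖}, r ≤ S := by
    rintro r ⟨a, hherm, hdiag, hnorm, rfl⟩
    set α : Fin (N+1) → ℝ := fun i => (a i i).re with hα
    have ha_real : ∀ i, a i i = ((α i : ℝ) : ℂ) := by
      intro i
      have h := congrFun (congrFun hherm i) i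
      rw [Matrix.conjTranspose_apply] at h
      exact (Complex.conj_eq_iff_re.mp h).symm
    have ha_eq : a = Matrix.diagonal (fun i => ((α i : ℝ) : ℂ)) := by
      have hdg : a.diag = fun i => ((α i : ℝ) : ℂ) := funext fun i => ha_real i
      rw [← hdiag.diagonal_diag, hdg]
    rw [ha_eq, commutator_eq] at hnorm
    -- the increment bound
    have hinc : ∀ p q : Fin (N+1), (p:ℕ) = (q:ℕ) + 1 → |α q - α p| ≤ dstep N ((q:ℕ)+1) := by
      intro p q hpq
      have hqN : (q:ℕ) < N := by have := p.isLt; omega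
      have hentry := le_trans (entry_le_opNorm _ (Sum.inr p) (Sum.inl q)) hnorm
      rw [Matrix.fromBlocks_apply₂₁, Matrix.of_apply, Emat, if_pos hpq, norm_mul] at hentry
      have h1 : ‖((Real.sqrt (((N:ℝ) - (q:ℕ)) * ((q:ℕ) + 1)) : ℝ) : ℂ)‖
          = Real.sqrt (((N:ℝ) - (q:ℕ)) * ((q:ℕ) + 1)) := by
        rw [Complex.norm_real, Real.norm_eq_abs, abs_of_nonneg (Real.sqrt_nonneg _)]
      have h2 : ‖(((α q : ℝ) : ℂ)) - ((α p : ℝ) : ℂ)‖ = |α q - α p| := by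
        rw [← Complex.ofReal_sub, Complex.norm_real, Real.norm_eq_abs]
      rw [h1, h2] at hentry
      refine le_of_mul_le_mul_left ?_ (sqrt_pos_of_lt hqN)
      rw [hprod hqN]
      exact hentry
    -- telescoping
    have htel : ∀ i : Fin (N+1), |α i - α 0| ≤ Gfun N (i:ℕ) := by
      intro i
      set A : ℕ → ℝ := fun k => if h : k < N + 1 then α ⟨k, h⟩ else 0 with hA2
      have hAi : ∀ j : Fin (N+1), A (j:ℕ) = α j := by
        intro j
        simp only [hA2]
        rw [dif_pos j.isLt]
      have hA0 : A 0 = α 0 := by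
        have := hAi 0
        simpa using this
      have h0 : α i - α 0 = ∑ k ∈ Finset.range (i:ℕ), (A (k+1) - A k) := by
        rw [Finset.sum_range_sub A (i:ℕ), hAi i, hA0]
      rw [h0, Gfun]
      refine le_trans (Finset.abs_sum_le_sum_abs _ _) ?_
      refine Finset.sum_le_sum (fun k hk => ?_)
      have hkN : k + 1 < N + 1 := by
        have := i.isLt
        have := Finset.mem_range.mp hk
        omega
      have e1 : A (k+1) = α ⟨k+1, hkN⟩ := by simp only [hA2]; rw [dif_pos hkN]
      have e2 : A k = α ⟨k, by omega⟩ := by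
        simp only [hA2]; rw [dif_pos (by omega : k < N + 1)]
      rw [e1, e2, abs_sub_comm]
      exact hinc ⟨k+1, hkN⟩ ⟨k, by omega⟩ rfl
    -- the value
    have hdiff : psiState N a 0 θ - psiState N a 0 0
        = ((∑ i : Fin (N+1), wgt N θ (i:ℕ) * α i - α 0 : ℝ) : ℂ) := by
      rw [ha_eq, psi_diag, psi_diag_zero]
      push_cast
      ring
    rw [hdiff, Complex.norm_real, Real.norm_eq_abs]
    have hstep1 : ∑ i : Fin (N+1), wgt N θ (i:ℕ) * α i - α 0
        = ∑ i : Fin (N+1), wgt N θ (i:ℕ) * (α i - α 0) := by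
      simp only [mul_sub, Finset.sum_sub_distrib, ← Finset.sum_mul, sum_wgt, one_mul]
    rw [hstep1]
    refine le_trans (Finset.abs_sum_le_sum_abs _ _) ?_
    have hstep2 : ∀ i : Fin (N+1), |wgt N θ (i:ℕ) * (α i - α 0)| ≤
        wgt N θ (i:ℕ) * Gfun N (i:ℕ) := by
      intro i
      rw [abs_mul, abs_of_nonneg (wgt_nonneg N θ _)]
      exact mul_le_mul_of_nonneg_left (htel i) (wgt_nonneg N θ _)
    refine le_trans (Finset.sum_le_sum (fun i _ => hstep2 i)) ?_
    rw [fin_sum_eq N (fun n => wgt N θ n * Gfun N n) (by simp [Gfun])]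
  -- membership
  have hmem : S ∈ {r : ℝ | ∃ a : Matrix (Fin (N + 1)) (Fin (N + 1)) ℂ,
      a.IsHermitian ∧ a.IsDiag ∧
      opNorm (DiracOp N * tensorOne N a - tensorOne N a * DiracOp N) ≤ 1 ∧
      r = ‖psiState N a 0 θ - psiState N a 0 0‖} := by
    refine ⟨Matrix.diagonal (fun i => ((Gfun N (i:ℕ) : ℝ) : ℂ)), ?_, Matrix.isDiag_diagonal _,
      ?_, ?_⟩
    · rw [Matrix.IsHermitian]
      ext i j
      rcases eq_or_ne i j with h | h
      · subst h
        simp [Matrix.conjTranspose_apply, Complex.star_def, Complex.conj_ofReal]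
      · simp [Matrix.conjTranspose_apply, Matrix.diagonal_apply_ne, h, Ne.symm h]
    · rw [commutator_eq]
      refine opNorm_le_one_of_perm _
        ⟨Sum.elim (fun q => Sum.inr (q+1)) (fun p => Sum.inl (p-1)),
         Sum.elim (fun q => Sum.inr (q+1)) (fun p => Sum.inl (p-1)),
         by rintro (q|p) <;> simp, by rintro (q|p) <;> simp⟩ ?_ ?_
      · rintro (p|p) (q|q) hne
        · simp [Matrix.fromBlocks_apply₁₁]
        · -- top-right block
          simp only [Equiv.coe_fn_mk, Sum.elim_inl, ne_eq, Sum.inr.injEq] at hne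
          rw [Matrix.fromBlocks_apply₁₂, Matrix.of_apply]
          have hF : Fmat N p q = 0 := by
            rw [Fmat, Matrix.conjTranspose_apply, Emat, if_neg, star_zero]
            intro h
            have hpN : (p:ℕ) < N := by have := q.isLt; omega
            have hplt : p < Fin.last N := by
              rw [Fin.lt_def, Fin.val_last]; exact hpN
            exact hne (Fin.ext (by rw [Fin.val_add_one_of_lt hplt, h]))
          rw [hF, zero_mul]
        · -- bottom-left block
          simp only [Equiv.coe_fn_mk, Sum.elim_inr, ne_eq, Sum.inl.injEq] at hne
          rw [Matrix.fromBlocks_apply₂₁, Matrix.of_apply]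
          have hE : Emat N p q = 0 := by
            rw [Emat, if_neg]
            intro h
            have hp0 : p ≠ 0 := by
              intro h0
              rw [h0] at h
              simp at h
            refine hne (Fin.ext ?_)
            rw [Fin.coe_sub_one, if_neg hp0]
            omega
          rw [hE, zero_mul]
        · simp [Matrix.fromBlocks_apply₂₂]
      · rintro (p|p)
        · -- row inl p
          simp only [Equiv.coe_fn_mk, Sum.elim_inl, Matrix.fromBlocks_apply₁₂, Matrix.of_apply]
          by_cases hp : (p:ℕ) < N
          · have hplt : p < Fin.last N := by rw [Fin.lt_def, Fin.val_last]; exact hp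
            have hval : ((p+1 : Fin (N+1)):ℕ) = (p:ℕ)+1 := Fin.val_add_one_of_lt hplt
            have hF : Fmat N p (p+1)
                = ((Real.sqrt (((N:ℝ) - (p:ℕ)) * ((p:ℕ)+1)) : ℝ) : ℂ) := by
              rw [Fmat, Matrix.conjTranspose_apply, Emat, if_pos (by rw [hval]),
                Complex.star_def, Complex.conj_ofReal]
            have hG : ((Gfun N ((p+1 : Fin (N+1)):ℕ) : ℝ) : ℂ) - ((Gfun N (p:ℕ) : ℝ) : ℂ)
                = ((dstep N ((p:ℕ)+1) : ℝ) : ℂ) := by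
              rw [hval, Gfun_succ]
              push_cast
              ring
            rw [hF, hG, ← Complex.ofReal_mul, Complex.norm_real, Real.norm_eq_abs]
            rw [abs_of_nonneg (mul_nonneg (Real.sqrt_nonneg _) (dstep_nonneg _ _))]
            rw [hprod hp]
          · have hF : Fmat N p (p+1) = 0 := by
              rw [Fmat, Matrix.conjTranspose_apply, Emat, if_neg, star_zero]
              intro h
              have := (p+1 : Fin (N+1)).isLt
              have := p.isLt
              omega
            rw [hF, zero_mul, norm_zero]
            exact zero_le_one
        · -- row inr p
          simp only [Equiv.coe_fn_mk, Sum.elim_inr, Matrix.fromBlocks_apply₂₁, Matrix.of_apply]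
          by_cases hp : p = 0
          · have hE : Emat N p (p-1) = 0 := by
              rw [Emat, if_neg]
              rw [hp]
              simp
            rw [hE, zero_mul, norm_zero]
            exact zero_le_one
          · have hp1 : 1 ≤ (p:ℕ) := by
              rcases Nat.eq_zero_or_pos (p:ℕ) with h | h
              · exact absurd (Fin.ext h) hp
              · exact h
            have hval : ((p - 1 : Fin (N+1)):ℕ) = (p:ℕ) - 1 := by
              rw [Fin.coe_sub_one, if_neg hp]
            have hmN : (p:ℕ) - 1 < N := by have := p.isLt; omega
            have hm1 : ((p:ℕ) - 1) + 1 = (p:ℕ) := by omega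
            have hcond : (p:ℕ) = ((p-1 : Fin (N+1)):ℕ) + 1 := by rw [hval]; omega
            have hE : Emat N p (p-1)
                = ((Real.sqrt (((N:ℝ) - (((p:ℕ)-1 : ℕ) : ℝ)) *
                    ((((p:ℕ)-1 : ℕ) : ℝ) + 1)) : ℝ) : ℂ) := by
              rw [Emat, if_pos hcond, hval]
            have hG : ((Gfun N ((p-1 : Fin (N+1)):ℕ) : ℝ) : ℂ) - ((Gfun N (p:ℕ) : ℝ) : ℂ)
                = -(((dstep N (((p:ℕ)-1) + 1) : ℝ) : ℂ)) := by
              rw [hval, ← hm1, Gfun_succ]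
              push_cast
              ring
            rw [hE, hG, mul_neg, norm_neg, ← Complex.ofReal_mul, Complex.norm_real,
              Real.norm_eq_abs,
              abs_of_nonneg (mul_nonneg (Real.sqrt_nonneg _) (dstep_nonneg _ _)),
              hprod hmN]
    · -- the value equals S
      rw [psi_diag, psi_diag_zero]
      have hG0 : ((Gfun N ((0 : Fin (N+1)):ℕ) : ℝ) : ℂ) = 0 := by
        norm_num [Gfun]
      rw [hG0, sub_zero]
      have hcast : ∑ i : Fin (N+1), ((wgt N θ (i:ℕ) : ℝ) : ℂ) * ((Gfun N (i:ℕ) : ℝ) : ℂ)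
          = ((∑ i : Fin (N+1), wgt N θ (i:ℕ) * Gfun N (i:ℕ) : ℝ) : ℂ) := by
        push_cast
        ring
      rw [hcast, Complex.norm_real, Real.norm_eq_abs, abs_of_nonneg, hS,
        fin_sum_eq N (fun n => wgt N θ n * Gfun N n) (by simp [Gfun])]
      refine Finset.sum_nonneg (fun i _ => mul_nonneg (wgt_nonneg _ _ _) ?_)
      exact Finset.sum_nonneg (fun k _ => dstep_nonneg _ _)
  rw [rhoAux, hRHS]
  exact le_antisymm (csSup_le ⟨S, hmem⟩ hub) (le_csSup ⟨S, fun r hr => hub r hr⟩ hmem)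
end
end
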